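/- arXiv:1601.04737 — 5 statements merged into one kernel-verified Lean document; each statement's English description precedes it below -/
import Mathlib

section
/- Let β ∈ (0,1), 0 < ε₁ ≤ 1/2, ε₂ > 0, σ ≥ 4κ̃/(1−β), and x ∈ ℝ^p. Suppose the sub-sampled Hessian H(x) satisfies λ_min(H(x)) ≥ (1−ε₁)γ, and suppose the sub-sampled gradient g(x) satisfies ‖∇F(x) − g(x)‖ ≤ ε₂. Then: (i) if ‖g(x)‖ < σε₂, then ‖∇F(x)‖ < (1+σ)ε₂; (ii) if ‖g(x)‖ ≥ σε₂ and p = −H(x)⁻¹g(x), then every step size α with 0 < α ≤ (1−β)(1−ε₁)/κ satisfies the Armijo condition F(x+αp) ≤ F(x) + αβ pᵀg(x), and for any α satisfying this Armijo condition, F(x+αp) − F(x*) ≤ (1 − 8αβ/(9κ̃))(F(x) − F(x*)). -/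
open scoped RealInnerProductSpace

/-- The Hessian of `F : ℝ^d → ℝ` at `x`, as a continuous linear map,
obtained as the (Fréchet) derivative of the gradient. -/
noncomputable def hess {d : ℕ} (F : EuclideanSpace ℝ (Fin d) → ℝ)
    (x : EuclideanSpace ℝ (Fin d)) :
    EuclideanSpace ℝ (Fin d) →L[ℝ] EuclideanSpace ℝ (Fin d) :=
  fderiv ℝ (gradient F) x

variable {d : ℕ}
local notation "E" => EuclideanSpace ℝ (Fin d)

lemma grad_eq (F : E → ℝ) : gradient F = fun y => (InnerProductSpace.toDual ℝ E).symm (fderiv ℝ F y) := rfl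

lemma inner_grad (F : E → ℝ) (y v : E) : ⟪gradient F y, v⟫ = fderiv ℝ F y v :=
  InnerProductSpace.toDual_symm_apply

lemma grad_contDiff {F : E → ℝ} (hF : ContDiff ℝ 2 F) : ContDiff ℝ 1 (gradient F) := by
  rw [grad_eq]
  exact ((InnerProductSpace.toDual ℝ E).symm.contDiff).comp (hF.fderiv_right (by norm_num))

lemma grad_hasFDeriv {F : E → ℝ} (hF : ContDiff ℝ 2 F) (y : E) :
    HasFDerivAt (gradient F) (hess F y) y :=
  (((grad_contDiff hF).differentiable one_ne_zero) y).hasFDerivAt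


lemma inner_hess {F : E → ℝ} (hF : ContDiff ℝ 2 F) (y v w : E) :
    ⟪hess F y v, w⟫ = fderiv ℝ (fderiv ℝ F) y v w := by
  set f'' := fderiv ℝ (fderiv ℝ F) y with hf''
  have hdF : ∀ z, HasFDerivAt (fderiv ℝ F) (fderiv ℝ (fderiv ℝ F) z) z := fun z =>
    (((hF.fderiv_right (m := 1) (by norm_num)).differentiable one_ne_zero) z).hasFDerivAt
  have ha : HasFDerivAt (fun z => ⟪gradient F z, w⟫)
      ((innerSL ℝ w).comp (hess F y)) y := by
    have := (innerSL ℝ w).hasFDerivAt.comp y (grad_hasFDeriv hF y)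
    have e : (fun z => ⟪gradient F z, w⟫) = ⇑(innerSL ℝ w) ∘ gradient F := by
      funext z
      exact real_inner_comm _ _
    rw [e]
    exact this
  have hb : HasFDerivAt (fun z => ⟪gradient F z, w⟫)
      ((ContinuousLinearMap.apply ℝ ℝ w).comp f'') y := by
    have := (ContinuousLinearMap.apply ℝ ℝ w).hasFDerivAt.comp y (hdF y)
    have e : (fun z => ⟪gradient F z, w⟫) = ⇑(ContinuousLinearMap.apply ℝ ℝ w) ∘ fderiv ℝ F := by
      funext z
      exact inner_grad F z w
    rw [e]
    exact this
  have := ha.unique hb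
  calc ⟪hess F y v, w⟫ = ((innerSL ℝ w).comp (hess F y)) v := (real_inner_comm _ _)
    _ = ((ContinuousLinearMap.apply ℝ ℝ w).comp f'') v := by rw [this]
    _ = f'' v w := rfl

lemma hess_symm {F : E → ℝ} (hF : ContDiff ℝ 2 F) (y v w : E) :
    ⟪hess F y v, w⟫ = ⟪hess F y w, v⟫ := by
  rw [inner_hess hF, inner_hess hF]
  exact second_derivative_symmetric
    (fun z => ((hF.differentiable (by norm_num)) z).hasFDerivAt)
    (((hF.fderiv_right (m := 1) (by norm_num)).differentiable one_ne_zero y).hasFDerivAt) v w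

lemma line_hasDerivAt {F : E → ℝ} (hF : ContDiff ℝ 2 F) (x v : E) (t : ℝ) :
    HasDerivAt (fun t : ℝ => F (x + t • v)) ⟪gradient F (x + t • v), v⟫ t := by
  have hline : HasDerivAt (fun t : ℝ => x + t • v) v t := by
    simpa using ((hasDerivAt_id t).smul_const v).const_add x
  have hFd : HasFDerivAt F (fderiv ℝ F (x + t • v)) (x + t • v) :=
    ((hF.differentiable (by norm_num)) _).hasFDerivAt
  rw [inner_grad]
  exact hFd.comp_hasDerivAt t hline

lemma line_grad_hasDerivAt {F : E → ℝ} (hF : ContDiff ℝ 2 F) (x v : E) (t : ℝ) :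
    HasDerivAt (fun t : ℝ => ⟪gradient F (x + t • v), v⟫)
      ⟪hess F (x + t • v) v, v⟫ t := by
  have hline : HasDerivAt (fun t : ℝ => x + t • v) v t := by
    simpa using ((hasDerivAt_id t).smul_const v).const_add x
  have h1 : HasFDerivAt (fun z => ⟪gradient F z, v⟫)
      ((innerSL ℝ v).comp (hess F (x + t • v))) (x + t • v) := by
    have := (innerSL ℝ v).hasFDerivAt.comp (x + t • v) (grad_hasFDeriv hF (x + t • v))
    have e : (fun z => ⟪gradient F z, v⟫) = ⇑(innerSL ℝ v) ∘ gradient F := by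
      funext z
      exact real_inner_comm _ _
    rw [e]
    exact this
  rw [real_inner_comm]
  exact h1.comp_hasDerivAt t hline

/-- 1D second-order bound. -/
lemma oneD_upper {φ φ' φ'' : ℝ → ℝ}
    (h1 : ∀ t, HasDerivAt φ (φ' t) t) (h2 : ∀ t, HasDerivAt φ' (φ'' t) t)
    {M : ℝ} (hM : ∀ t, φ'' t ≤ M) : φ 1 ≤ φ 0 + φ' 0 + M / 2 := by
  set h : ℝ → ℝ := fun t => φ t - φ 0 - t * φ' 0 - M * t ^ 2 / 2 with hh
  have hd : ∀ t, HasDerivAt h (φ' t - φ' 0 - M * t) t := by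
    intro t
    have := (((h1 t).sub_const (φ 0)).sub
        ((hasDerivAt_id t).mul_const (φ' 0))).sub
        (((hasDerivAt_pow 2 t).const_mul M).div_const 2)
    exact this.congr_deriv (by norm_num; ring)
  obtain ⟨c, hc, hceq⟩ := exists_hasDerivAt_eq_slope h (fun t => φ' t - φ' 0 - M * t)
    one_pos (fun t _ => (hd t).continuousAt.continuousWithinAt) (fun t _ => hd t)
  obtain ⟨e, he, heeq⟩ := exists_hasDerivAt_eq_slope φ' φ'' hc.1
    (fun t _ => (h2 t).continuousAt.continuousWithinAt) (fun t _ => h2 t)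
  have hslope : φ' c - φ' 0 = φ'' e * c := by
    rw [heeq]
    have hc0 : c ≠ 0 := ne_of_gt hc.1
    field_simp
    ring
  have hle : φ' c - φ' 0 - M * c ≤ 0 := by
    nlinarith [hM e, hc.1, hc.2]
  have h0 : h 0 = 0 := by simp [hh]
  have h1v : h 1 = φ 1 - φ 0 - φ' 0 - M / 2 := by simp [hh]
  rw [hceq, h0, h1v] at hle
  linarith [hle]

lemma taylor_upper {F : E → ℝ} (hF : ContDiff ℝ 2 F) {M : ℝ}
    (hb : ∀ y v, ⟪hess F y v, v⟫ ≤ M * ‖v‖ ^ 2) (x v : E) :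
    F (x + v) ≤ F x + ⟪gradient F x, v⟫ + M * ‖v‖ ^ 2 / 2 := by
  have := oneD_upper (φ := fun t : ℝ => F (x + t • v))
    (φ' := fun t => ⟪gradient F (x + t • v), v⟫)
    (φ'' := fun t => ⟪hess F (x + t • v) v, v⟫)
    (line_hasDerivAt hF x v) (line_grad_hasDerivAt hF x v)
    (M := M * ‖v‖ ^ 2) (fun t => hb _ v)
  simpa using this

lemma taylor_lower {F : E → ℝ} (hF : ContDiff ℝ 2 F) {m : ℝ}
    (hb : ∀ y v, m * ‖v‖ ^ 2 ≤ ⟪hess F y v, v⟫) (x v : E) :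
    F x + ⟪gradient F x, v⟫ + m * ‖v‖ ^ 2 / 2 ≤ F (x + v) := by
  have := oneD_upper (φ := fun t : ℝ => -F (x + t • v))
    (φ' := fun t => -⟪gradient F (x + t • v), v⟫)
    (φ'' := fun t => -⟪hess F (x + t • v) v, v⟫)
    (fun t => (line_hasDerivAt hF x v t).neg)
    (fun t => (line_grad_hasDerivAt hF x v t).neg)
    (M := -(m * ‖v‖ ^ 2)) (fun t => by simpa using hb (x + t • v) v)
  have h1 : (1:ℝ) • v = v := one_smul _ _
  have h0 : (0:ℝ) • v = (0 : E) := zero_smul _ _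
  rw [h1, h0, add_zero] at this
  linarith

lemma hess_combo {m : ℕ} (f : Fin m → E → ℝ) (hf : ∀ i, ContDiff ℝ 2 (f i)) (c : ℝ)
    {F : E → ℝ} (hFeq : F = fun y => c * ∑ i, f i y) (y : E) :
    hess F y = c • ∑ i, hess (f i) y := by
  have hgrad : gradient F = fun z => c • ∑ i, gradient (f i) z := by
    funext z
    rw [grad_eq]
    simp only [hFeq]
    rw [fderiv_const_mul (by
      exact DifferentiableAt.fun_sum fun i _ => ((hf i).differentiable (by norm_num)) z)]
    rw [fderiv_fun_sum (fun i _ => ((hf i).differentiable (by norm_num)) z)]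
    simp [grad_eq, map_sum]
  rw [hess, hgrad]
  have hdiff : ∀ i, DifferentiableAt ℝ (fun z => gradient (f i) z) y := fun i =>
    ((grad_contDiff (hf i)).differentiable one_ne_zero) y
  rw [fderiv_fun_const_smul (by exact DifferentiableAt.fun_sum fun i _ => hdiff i)]
  rw [fderiv_fun_sum (fun i _ => hdiff i)]
  rfl

lemma top_subset_sum {m : ℕ} (K : Fin m → ℝ) (Q T : Finset (Fin m)) (hcard : T.card = Q.card)
    (htop : ∀ i ∈ Q, ∀ j ∉ Q, K j ≤ K i) : ∑ i ∈ T, K i ≤ ∑ i ∈ Q, K i := by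
  have hT : ∑ i ∈ T ∩ Q, K i + ∑ i ∈ T \ Q, K i = ∑ i ∈ T, K i :=
    Finset.sum_inter_add_sum_sdiff T Q K
  have hQ : ∑ i ∈ Q ∩ T, K i + ∑ i ∈ Q \ T, K i = ∑ i ∈ Q, K i :=
    Finset.sum_inter_add_sum_sdiff Q T K
  have hinter : ∑ i ∈ T ∩ Q, K i = ∑ i ∈ Q ∩ T, K i := by rw [Finset.inter_comm]
  have hcard2 : (T \ Q).card = (Q \ T).card := by
    have h1 := Finset.card_inter_add_card_sdiff T Q
    have h2 := Finset.card_inter_add_card_sdiff Q T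
    rw [Finset.inter_comm] at h1
    omega
  have hdiff : ∑ i ∈ T \ Q, K i ≤ ∑ i ∈ Q \ T, K i := by
    rcases Finset.eq_empty_or_nonempty (Q \ T) with hemp | hne
    · have : T \ Q = ∅ := Finset.card_eq_zero.mp (by rw [hcard2, hemp]; simp)
      rw [this, hemp]
    · obtain ⟨b0, hb0mem, hb0min⟩ := Finset.exists_min_image (Q \ T) K hne
      have hb0Q : b0 ∈ Q := (Finset.mem_sdiff.mp hb0mem).1
      have h1 : ∑ i ∈ T \ Q, K i ≤ (T \ Q).card • K b0 :=
        Finset.sum_le_card_nsmul _ _ _ (fun a ha =>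
          htop b0 hb0Q a (Finset.mem_sdiff.mp ha).2)
      have h2 : (Q \ T).card • K b0 ≤ ∑ i ∈ Q \ T, K i :=
        Finset.card_nsmul_le_sum _ _ _ (fun b hb => hb0min b hb)
      rw [hcard2] at h1
      linarith
  linarith

lemma sample_sum_le {m s : ℕ} (hs : 0 < s) (K : Fin m → ℝ) (Khat : ℝ) (S : Fin s → Fin m)
    (hKhat :
      (Function.Injective S ∧ ∃ Q : Finset (Fin m), Q.card = s ∧
          (∀ i ∈ Q, ∀ j ∉ Q, K j ≤ K i) ∧ Khat = (∑ i ∈ Q, K i) / s) ∨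
      (¬ Function.Injective S ∧ (∀ i, K i ≤ Khat) ∧ ∃ i, Khat = K i)) :
    ∑ j, K (S j) ≤ s * Khat := by
  rcases hKhat with ⟨hinj, Q, hQc, hQtop, hQv⟩ | ⟨_, hub, _⟩
  · have hs0 : (s : ℝ) ≠ 0 := Nat.cast_ne_zero.mpr hs.ne'
    have hKs : (s : ℝ) * Khat = ∑ i ∈ Q, K i := by rw [hQv]; field_simp
    have him : ∑ j, K (S j) = ∑ i ∈ Finset.univ.image S, K i :=
      (Finset.sum_image (fun a _ b _ h => hinj h)).symm
    have hcard : (Finset.univ.image S).card = Q.card := by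
      rw [Finset.card_image_of_injective _ hinj, Finset.card_univ, Fintype.card_fin, hQc]
    rw [him, hKs]
    exact top_subset_sum K Q _ hcard hQtop
  · calc ∑ j, K (S j) ≤ ∑ _j : Fin s, Khat := Finset.sum_le_sum (fun j _ => hub (S j))
      _ = s * Khat := by simp [Finset.sum_const, nsmul_eq_mul]

lemma khat_pos {m s : ℕ} (hs : 0 < s) (K : Fin m → ℝ) (hKpos : ∀ i, 0 < K i) (Khat : ℝ)
    (S : Fin s → Fin m)
    (hKhat :
      (Function.Injective S ∧ ∃ Q : Finset (Fin m), Q.card = s ∧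
          (∀ i ∈ Q, ∀ j ∉ Q, K j ≤ K i) ∧ Khat = (∑ i ∈ Q, K i) / s) ∨
      (¬ Function.Injective S ∧ (∀ i, K i ≤ Khat) ∧ ∃ i, Khat = K i)) :
    0 < Khat := by
  rcases hKhat with ⟨_, Q, hQc, _, hQv⟩ | ⟨_, _, i, hv⟩
  · have hQne : Q.Nonempty := Finset.card_pos.mp (by omega)
    have : 0 < ∑ i ∈ Q, K i := Finset.sum_pos (fun i _ => hKpos i) hQne
    rw [hQv]
    positivity
  · rw [hv]; exact hKpos i

lemma cs_aux (a b c Khat : ℝ) (hdz : (2 * b) ^ 2 - 4 * a * c ≤ 0)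
    (hmul : a * c ≤ (Khat * b) * c) (hb : 0 < b) : b ≤ Khat * c := by
  nlinarith [hdz, hmul, hb]

lemma sq_le_imp (a b : ℝ) (h : a ^ 2 ≤ b ^ 2) (ha : 0 ≤ a) (hb : 0 ≤ b) : a ≤ b := by
  nlinarith [h, ha, hb]

lemma armijo_final (β γ ε₁ ε₂ Kc σ Khat α t A GF gp q1 q0 ng : ℝ)
    (hβ : 0 < β) (hβ1 : β < 1) (hε₁h : ε₁ ≤ 1 / 2) (hγ : 0 < γ)
    (hα : 0 < α) (ht : 0 ≤ t)
    (htay : q1 ≤ q0 + α * GF + Kc * (α * t) ^ 2 / 2)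
    (hsplit : GF ≤ gp + ε₂ * t)
    (hgp : gp = -A)
    (hA : (1 - ε₁) * γ * t ^ 2 ≤ A)
    (hgnorm : ng ≤ Khat * t)
    (hgeq : σ * ε₂ ≤ ng)
    (hσγ : 4 * Khat ≤ σ * (1 - β) * γ)
    (hσpos : 0 < σ)
    (hαK : α * Kc ≤ (1 - β) * (1 - ε₁) * γ) :
    q1 ≤ q0 + α * β * -A := by
  have h1b : 0 < 1 - β := by linarith
  have a1 : σ * ε₂ * t ≤ ng * t := mul_le_mul_of_nonneg_right hgeq ht
  have a2 : ng * t ≤ Khat * t * t := by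
    have := mul_le_mul_of_nonneg_right hgnorm ht
    linarith
  have a3 : 4 * Khat * t ^ 2 ≤ σ * (1 - β) * γ * t ^ 2 :=
    mul_le_mul_of_nonneg_right hσγ (sq_nonneg t)
  have a4 : σ * (4 * (ε₂ * t)) ≤ σ * ((1 - β) * γ * t ^ 2) := by linarith [a1, a2, a3]
  have he1 : ε₂ * t ≤ (1 - β) * γ * t ^ 2 / 4 := by
    have := (mul_le_mul_iff_right₀ hσpos).mp a4
    linarith
  have he2 : Kc * α * t ^ 2 / 2 ≤ (1 - β) * (1 - ε₁) * γ * t ^ 2 / 2 := by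
    have := mul_le_mul_of_nonneg_right hαK (sq_nonneg t)
    linarith [this]
  have he3 : (1 - β) * (1 - ε₁) * γ * t ^ 2 ≤ (1 - β) * A := by
    have := mul_le_mul_of_nonneg_left hA h1b.le
    linarith [this]
  have he4 : GF ≤ -A + ε₂ * t := by rw [hgp] at hsplit; linarith
  have m1 : α * GF ≤ -(α * A) + α * (ε₂ * t) := by
    have := mul_le_mul_of_nonneg_left he4 hα.le
    linarith [this]
  have m2 : α * (ε₂ * t) ≤ α * ((1 - β) * γ * t ^ 2 / 4) :=
    mul_le_mul_of_nonneg_left he1 hα.le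
  have m3 : Kc * (α * t) ^ 2 / 2 ≤ α * ((1 - β) * (1 - ε₁) * γ * t ^ 2 / 2) := by
    have := mul_le_mul_of_nonneg_left he2 hα.le
    linarith [this]
  have m4 : α * ((1 - β) * γ * t ^ 2 / 4) ≤ α * ((1 - β) * (1 - ε₁) * γ * t ^ 2 / 2) := by
    have hprod : 0 ≤ α * ((1 - β) * γ * t ^ 2 * (1 - 2 * ε₁)) :=
      mul_nonneg hα.le (mul_nonneg (mul_nonneg (mul_nonneg h1b.le hγ.le) (sq_nonneg t))
        (by linarith))
    linarith [hprod]
  have m5 : α * ((1 - β) * (1 - ε₁) * γ * t ^ 2) ≤ α * ((1 - β) * A) :=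
    mul_le_mul_of_nonneg_left he3 hα.le
  linarith [htay, m1, m2, m3, m4, m5]

lemma rate_final (γ β α Khat A ng q1 q0 qs GFn : ℝ)
    (hγ : 0 < γ) (hβ : 0 < β) (hα : 0 < α) (hKhat : 0 < Khat)
    (harm : q1 ≤ q0 + α * β * -A)
    (hgnorm2 : ng ^ 2 ≤ Khat * A)
    (hpl : 2 * γ * (q0 - qs) ≤ GFn ^ 2)
    (hgF2 : GFn ^ 2 ≤ (25 / 16) * ng ^ 2)
    (hD : 0 ≤ q0 - qs) :
    q1 - qs ≤ (1 - 8 * α * β / (9 * (Khat / γ))) * (q0 - qs) := by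
  have hγ0 : γ ≠ 0 := ne_of_gt hγ
  have hK0 : Khat ≠ 0 := ne_of_gt hKhat
  have hαβ : 0 ≤ α * β := mul_nonneg hα.le hβ.le
  refine le_of_mul_le_mul_left ?_ hKhat
  have hrhs : Khat * ((1 - 8 * α * β / (9 * (Khat / γ))) * (q0 - qs)) =
      Khat * (q0 - qs) - (8 * α * β * γ / 9) * (q0 - qs) := by
    field_simp
  rw [hrhs]
  have hstep2 : α * β * ng ^ 2 ≤ α * β * (Khat * A) :=
    mul_le_mul_of_nonneg_left hgnorm2 hαβ
  have hstep3 : 32 * γ * (q0 - qs) ≤ 25 * ng ^ 2 := by linarith [hpl, hgF2]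
  linarith [mul_le_mul_of_nonneg_left hstep3 hαβ, hstep2, hD,
    mul_le_mul_of_nonneg_left harm hKhat.le,
    mul_nonneg (mul_nonneg hαβ hγ.le) hD]

set_option maxHeartbeats 1000000 in
theorem stmt_9 {d n s sg : ℕ} (hn : 0 < n) (hs : 0 < s) (hsg : 0 < sg)
    (f : Fin n → EuclideanSpace ℝ (Fin d) → ℝ) (K : Fin n → ℝ)
    (F : EuclideanSpace ℝ (Fin d) → ℝ)
    (γ Kc β ε₁ ε₂ σ Khat : ℝ) (x xstar p : EuclideanSpace ℝ (Fin d))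
    (S : Fin s → Fin n) (Sg : Fin sg → Fin n)
    -- each fᵢ is twice continuously differentiable, convex, with `∇²fᵢ ⪯ Kᵢ I`
    (hf : ∀ i, ContDiff ℝ 2 (f i))
    (hKpos : ∀ i, 0 < K i)
    (hfpsd : ∀ i y v, 0 ≤ ⟪(hess (f i) y) v, v⟫)
    (hfK : ∀ i y v, ⟪(hess (f i) y) v, v⟫ ≤ K i * ‖v‖ ^ 2)
    -- `F = (1/n) ∑ fᵢ`
    (hF : ∀ y, F y = (1 / n : ℝ) * ∑ i, f i y)
    -- `γ I ⪯ ∇²F ⪯ K I` with `0 < γ ≤ K`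
    (hγ : 0 < γ) (hγK : γ ≤ Kc)
    (hFlow : ∀ y v, γ * ‖v‖ ^ 2 ≤ ⟪(hess F y) v, v⟫)
    (hFup : ∀ y v, ⟪(hess F y) v, v⟫ ≤ Kc * ‖v‖ ^ 2)
    -- `xstar` is the (unique) minimizer of `F`
    (hmin : ∀ y, F xstar ≤ F y)
    (hβ : 0 < β) (hβ1 : β < 1) (hε₁ : 0 < ε₁) (hε₁half : ε₁ ≤ 1 / 2) (hε₂ : 0 < ε₂)
    -- `Khat = K̂_{|S|}` if the Hessian sample is without replacement (distinct
    -- indices), and `Khat = K̂₁ = max Kᵢ` otherwise; `κ̃ = Khat/γ`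
    (hKhat :
      (Function.Injective S ∧ ∃ Q : Finset (Fin n), Q.card = s ∧
          (∀ i ∈ Q, ∀ j ∉ Q, K j ≤ K i) ∧ Khat = (∑ i ∈ Q, K i) / s) ∨
      (¬ Function.Injective S ∧ (∀ i, K i ≤ Khat) ∧ ∃ i, Khat = K i))
    -- `σ ≥ 4 κ̃ / (1-β)`
    (hσ : σ ≥ 4 * (Khat / γ) / (1 - β))
    -- `λ_min(H(x)) ≥ (1-ε₁)γ` for the sub-sampled Hessian `H(x)`
    (hH : ∀ v, (1 - ε₁) * γ * ‖v‖ ^ 2 ≤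
        ⟪((s : ℝ)⁻¹ • ∑ j, hess (f (S j)) x) v, v⟫)
    -- the sub-sampled gradient `g(x) = (1/|S_g|) ∑_{j∈S_g} ∇f_j(x)` approximates `∇F(x)`
    (hg : ‖gradient F x - (sg : ℝ)⁻¹ • ∑ j, gradient (f (Sg j)) x‖ ≤ ε₂) :
    -- (i) if the stopping criterion holds, the full gradient is small
    (‖(sg : ℝ)⁻¹ • ∑ j, gradient (f (Sg j)) x‖ < σ * ε₂ →
        ‖gradient F x‖ < (1 + σ) * ε₂) ∧
    -- (ii) otherwise, with `p = -H(x)⁻¹ g(x)`: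
    (‖(sg : ℝ)⁻¹ • ∑ j, gradient (f (Sg j)) x‖ ≥ σ * ε₂ →
      ((s : ℝ)⁻¹ • ∑ j, hess (f (S j)) x) p =
          -((sg : ℝ)⁻¹ • ∑ j, gradient (f (Sg j)) x) →
      -- any `0 < α ≤ (1-β)(1-ε₁)/κ` satisfies the Armijo condition (w.r.t. `g`)
      (∀ α : ℝ, 0 < α → α ≤ (1 - β) * (1 - ε₁) / (Kc / γ) →
          F (x + α • p) ≤
            F x + α * β * ⟪p, (sg : ℝ)⁻¹ • ∑ j, gradient (f (Sg j)) x⟫) ∧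
      -- and any `α > 0` satisfying this Armijo condition yields the stated linear rate
      (∀ α : ℝ, 0 < α →
          F (x + α • p) ≤
            F x + α * β * ⟪p, (sg : ℝ)⁻¹ • ∑ j, gradient (f (Sg j)) x⟫ →
          F (x + α • p) - F xstar ≤
            (1 - 8 * α * β / (9 * (Khat / γ))) * (F x - F xstar))) := by
  set g : EuclideanSpace ℝ (Fin d) := (sg : ℝ)⁻¹ • ∑ j, gradient (f (Sg j)) x with hgdef
  set H : EuclideanSpace ℝ (Fin d) →L[ℝ] EuclideanSpace ℝ (Fin d) :=
    (s : ℝ)⁻¹ • ∑ j, hess (f (S j)) x with hHdef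
  have hKhat_pos : 0 < Khat := khat_pos hs K hKpos Khat S hKhat
  have h1b : 0 < 1 - β := by linarith
  have hσpos : 0 < σ := lt_of_lt_of_le (by positivity) hσ
  constructor
  · intro hlt
    have htri : ‖gradient F x‖ - ‖g‖ ≤ ‖gradient F x - g‖ := norm_sub_norm_le _ _
    have hexp : (1 + σ) * ε₂ = ε₂ + σ * ε₂ := by ring
    linarith [htri, hg, hlt, hexp]
  · intro hgeq hHp
    rcases Nat.eq_zero_or_pos d with hd | hd
    · exfalso
      subst hd
      have hg0 : g = 0 := Subsingleton.elim _ _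
      rw [hg0, norm_zero] at hgeq
      linarith [mul_pos hσpos hε₂]
    -- main case : d > 0
    have hγ0 : γ ≠ 0 := ne_of_gt hγ
    have hK0 : Khat ≠ 0 := ne_of_gt hKhat_pos
    have hKc : 0 < Kc := lt_of_lt_of_le hγ hγK
    have hFeq : F = fun y => (1 / n : ℝ) * ∑ i, f i y := funext hF
    have hFC : ContDiff ℝ 2 F := by
      rw [hFeq]; exact contDiff_const.mul (ContDiff.sum fun i _ => hf i)
    have hHinner : ∀ u w, ⟪H u, w⟫ = (s : ℝ)⁻¹ * ∑ j, ⟪hess (f (S j)) x u, w⟫ := by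
      intro u w
      rw [hHdef, ContinuousLinearMap.smul_apply, real_inner_smul_left,
        ContinuousLinearMap.sum_apply, sum_inner]
    have hHsym : ∀ u w, ⟪H u, w⟫ = ⟪H w, u⟫ := by
      intro u w
      rw [hHinner, hHinner]
      congr 1
      exact Finset.sum_congr rfl fun j _ => hess_symm (hf (S j)) x u w
    have hs0 : (0 : ℝ) < (s : ℝ) := Nat.cast_pos.mpr hs
    have hHK : ∀ v, ⟪H v, v⟫ ≤ Khat * ‖v‖ ^ 2 := by
      intro v
      rw [hHinner]
      have hsum : ∑ j, ⟪hess (f (S j)) x v, v⟫ ≤ (∑ j, K (S j)) * ‖v‖ ^ 2 := by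
        rw [Finset.sum_mul]
        exact Finset.sum_le_sum fun j _ => hfK (S j) x v
      have hsum2 := sample_sum_le hs K Khat S hKhat
      calc (s : ℝ)⁻¹ * ∑ j, ⟪hess (f (S j)) x v, v⟫
          ≤ (s : ℝ)⁻¹ * (((s : ℝ) * Khat) * ‖v‖ ^ 2) := by
            apply mul_le_mul_of_nonneg_left _ (by positivity)
            exact le_trans hsum (mul_le_mul_of_nonneg_right hsum2 (sq_nonneg _))
        _ = Khat * ‖v‖ ^ 2 := by field_simp
    have hHpsd : ∀ u, 0 ≤ ⟪H u, u⟫ := by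
      intro u
      refine le_trans ?_ (hH u)
      have h1 : 0 < 1 - ε₁ := by linarith
      positivity
    -- semidefinite Cauchy-Schwarz
    have hCS : ‖H p‖ ^ 2 ≤ Khat * ⟪H p, p⟫ := by
      set w := H p with hw
      have hwsq : ⟪H p, w⟫ = ‖w‖ ^ 2 := by rw [hw, real_inner_self_eq_norm_sq]
      have hq : ∀ t : ℝ, 0 ≤ ⟪H w, w⟫ * (t * t) + (2 * ‖w‖ ^ 2) * t + ⟪H p, p⟫ := by
        intro t
        have h0 := hHpsd (p + t • w)
        have hexp : ⟪H (p + t • w), p + t • w⟫ =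
            ⟪H w, w⟫ * (t * t) + (2 * ‖w‖ ^ 2) * t + ⟪H p, p⟫ := by
          have e1 : H (p + t • w) = H p + t • H w := by rw [map_add, map_smul]
          rw [e1]
          simp only [inner_add_left, inner_add_right, real_inner_smul_left,
            real_inner_smul_right]
          rw [hHsym w p, hwsq]
          ring
        linarith [hexp ▸ h0]
      have hdz := discrim_le_zero hq
      rw [discrim] at hdz
      have hupper : ⟪H w, w⟫ ≤ Khat * ‖w‖ ^ 2 := hHK w
      rcases eq_or_lt_of_le (norm_nonneg w) with h0 | h0
      · have : ‖w‖ = 0 := h0.symm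
        rw [this]
        have h2 := mul_nonneg hKhat_pos.le (hHpsd p)
        linarith [h2]
      · have hmul : ⟪H w, w⟫ * ⟪H p, p⟫ ≤ (Khat * ‖w‖ ^ 2) * ⟪H p, p⟫ :=
          mul_le_mul_of_nonneg_right hupper (hHpsd p)
        exact cs_aux _ _ _ _ hdz hmul (pow_pos h0 2)
    have hgnegHp : g = -(H p) := by rw [hHp, neg_neg]
    have hgp : ⟪g, p⟫ = -⟪H p, p⟫ := by rw [hgnegHp, inner_neg_left]
    have hgnorm2 : ‖g‖ ^ 2 ≤ Khat * ⟪H p, p⟫ := by rw [hgnegHp, norm_neg]; exact hCS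
    have hgnorm : ‖g‖ ≤ Khat * ‖p‖ := by
      have h1 : ‖g‖ ^ 2 ≤ (Khat * ‖p‖) ^ 2 := by
        have h2 := mul_le_mul_of_nonneg_left (hHK p) hKhat_pos.le
        linarith [h2, hgnorm2]
      exact sq_le_imp _ _ h1 (norm_nonneg g) (mul_nonneg hKhat_pos.le (norm_nonneg p))
    -- γ ≤ Khat
    have hγKhat : γ ≤ Khat := by
      have hhessF : hess F x = (1 / n : ℝ) • ∑ i, hess (f i) x := hess_combo f hf _ hFeq x
      set v0 : EuclideanSpace ℝ (Fin d) := EuclideanSpace.single ⟨0, hd⟩ (1 : ℝ) with hv0def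
      have hv0 : ‖v0‖ = 1 := by rw [hv0def, EuclideanSpace.norm_single]; norm_num
      have hlow := hFlow x v0
      have hup : ⟪hess F x v0, v0⟫ = (1 / n : ℝ) * ∑ i, ⟪hess (f i) x v0, v0⟫ := by
        rw [hhessF, ContinuousLinearMap.smul_apply, real_inner_smul_left,
          ContinuousLinearMap.sum_apply, sum_inner]
      have havg : ∑ i, ⟪hess (f i) x v0, v0⟫ ≤ ∑ i, K i := by
        refine Finset.sum_le_sum fun i _ => ?_
        have := hfK i x v0
        rw [hv0] at this
        simpa using this
      have hsumK : ∑ i : Fin n, K i ≤ (n : ℝ) * Khat := by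
        rcases hKhat with ⟨_, Q, hQc, hQtop, hQv⟩ | ⟨_, hub, _⟩
        · have hsne : (s : ℝ) ≠ 0 := Nat.cast_ne_zero.mpr hs.ne'
          have hsK : ∑ i ∈ Q, K i = (s : ℝ) * Khat := by rw [hQv]; field_simp
          have hout : ∀ j ∉ Q, K j ≤ Khat := by
            intro j hj
            have h1 : Q.card • K j ≤ ∑ i ∈ Q, K i :=
              Finset.card_nsmul_le_sum _ _ _ fun i hi => hQtop i hi j hj
            rw [hQc, nsmul_eq_mul, hsK] at h1
            exact le_of_mul_le_mul_left (by linarith) hs0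
          have hsplit : ∑ i ∈ Finset.univ ∩ Q, K i + ∑ i ∈ Finset.univ \ Q, K i
              = ∑ i : Fin n, K i := Finset.sum_inter_add_sum_sdiff _ _ _
          have hUQ : Finset.univ ∩ Q = Q := by simp
          have hrest : ∑ i ∈ Finset.univ \ Q, K i ≤ ((n - s : ℕ) : ℝ) * Khat := by
            have h1 : ∑ i ∈ Finset.univ \ Q, K i ≤ (Finset.univ \ Q).card • Khat :=
              Finset.sum_le_card_nsmul _ _ _ fun j hj =>
                hout j (Finset.mem_sdiff.mp hj).2
            have h2 : (Finset.univ \ Q).card = n - s := by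
              rw [Finset.card_sdiff_of_subset (Finset.subset_univ Q), Finset.card_univ,
                Fintype.card_fin, hQc]
            rw [h2, nsmul_eq_mul] at h1
            exact h1
          have hsn : s ≤ n := by
            have h := Finset.card_le_univ Q
            have h2 : Fintype.card (Fin n) = n := Fintype.card_fin n
            omega
          have hcast : ((n - s : ℕ) : ℝ) = (n : ℝ) - (s : ℝ) := by
            exact Nat.cast_sub hsn
          rw [hUQ, hsK] at hsplit
          rw [hcast] at hrest
          nlinarith [hKhat_pos]
        · calc ∑ i : Fin n, K i ≤ ∑ _i : Fin n, Khat :=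
              Finset.sum_le_sum fun i _ => hub i
            _ = (n : ℝ) * Khat := by simp [Finset.sum_const, nsmul_eq_mul]
      have hn0 : (0 : ℝ) < (n : ℝ) := Nat.cast_pos.mpr hn
      rw [hv0] at hlow
      rw [hup] at hlow
      have : γ ≤ (1 / n : ℝ) * ((n : ℝ) * Khat) := by
        calc γ = γ * 1 ^ 2 := by ring
          _ ≤ (1 / n : ℝ) * ∑ i, ⟪hess (f i) x v0, v0⟫ := hlow
          _ ≤ (1 / n : ℝ) * ((n : ℝ) * Khat) := by
              apply mul_le_mul_of_nonneg_left _ (by positivity)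
              exact le_trans havg hsumK
      calc γ ≤ (1 / n : ℝ) * ((n : ℝ) * Khat) := this
        _ = Khat := by field_simp
    constructor
    · -- Armijo condition
      intro α hα hαle
      have hσγ : 4 * Khat ≤ σ * (1 - β) * γ := by
        rw [ge_iff_le, div_le_iff₀ h1b] at hσ
        have h2 := mul_le_mul_of_nonneg_right hσ hγ.le
        calc 4 * Khat = 4 * (Khat / γ) * γ := by field_simp
          _ ≤ σ * (1 - β) * γ := h2
      have hαK : α * Kc ≤ (1 - β) * (1 - ε₁) * γ := by
        have h1 : α * (Kc / γ) ≤ (1 - β) * (1 - ε₁) := (le_div_iff₀ (by positivity)).mp hαle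
        have h2 := mul_le_mul_of_nonneg_right h1 hγ.le
        calc α * Kc = α * (Kc / γ) * γ := by field_simp
          _ ≤ (1 - β) * (1 - ε₁) * γ := h2
      have htay := taylor_upper hFC hFup x (α • p)
      have hnorm : ‖α • p‖ = α * ‖p‖ := by
        rw [norm_smul, Real.norm_eq_abs, abs_of_pos hα]
      have hin : ⟪gradient F x, α • p⟫ = α * ⟪gradient F x, p⟫ :=
        real_inner_smul_right _ _ _
      rw [hnorm, hin] at htay
      have hsplit : ⟪gradient F x, p⟫ ≤ ⟪g, p⟫ + ε₂ * ‖p‖ := by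
        have h1 : ⟪gradient F x - g, p⟫ ≤ ‖gradient F x - g‖ * ‖p‖ :=
          real_inner_le_norm _ _
        have h2 : ⟪gradient F x - g, p⟫ = ⟪gradient F x, p⟫ - ⟪g, p⟫ :=
          inner_sub_left _ _ _
        linarith [mul_le_mul_of_nonneg_right hg (norm_nonneg p)]
      have hpg : ⟪p, g⟫ = -⟪H p, p⟫ := by rw [real_inner_comm]; exact hgp
      rw [hpg]
      exact armijo_final β γ ε₁ ε₂ Kc σ Khat α ‖p‖ ⟪H p, p⟫ ⟪gradient F x, p⟫
        ⟪g, p⟫ (F (x + α • p)) (F x) ‖g‖ hβ hβ1 hε₁half hγ hα (norm_nonneg p)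
        htay hsplit hgp (hH p) hgnorm hgeq hσγ hσpos hαK
    · -- linear rate
      intro α hα harm
      have hσ4 : 4 ≤ σ := by
        have h1 : 1 ≤ Khat / γ := (one_le_div hγ).mpr hγKhat
        have h2 : 4 * (Khat / γ) ≤ 4 * (Khat / γ) / (1 - β) := by
          rw [le_div_iff₀ h1b]
          nlinarith [hβ, h1, mul_nonneg (by linarith : (0:ℝ) ≤ Khat / γ) hβ.le]
        linarith [hσ]
      have hpl : 2 * γ * (F x - F xstar) ≤ ‖gradient F x‖ ^ 2 := by
        have htl := taylor_lower hFC hFlow x (xstar - x)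
        have hxx : x + (xstar - x) = xstar := by abel
        rw [hxx] at htl
        have hcs : -(‖gradient F x‖ * ‖xstar - x‖) ≤ ⟪gradient F x, xstar - x⟫ := by
          have h1 := abs_real_inner_le_norm (gradient F x) (xstar - x)
          have h2 := neg_abs_le ⟪gradient F x, xstar - x⟫
          linarith
        set r := ‖xstar - x‖ with hrdef
        have hd1 : F x - F xstar ≤ ‖gradient F x‖ * r - γ * r ^ 2 / 2 := by
          linarith [htl, hcs]
        have hd2 := mul_le_mul_of_nonneg_left hd1 (by positivity : (0:ℝ) ≤ 2 * γ)
        linarith [hd2, sq_nonneg (γ * r - ‖gradient F x‖)]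
      have hgF2 : ‖gradient F x‖ ^ 2 ≤ (25 / 16) * ‖g‖ ^ 2 := by
        have h1 : ‖gradient F x‖ ≤ ε₂ + ‖g‖ := by
          have := norm_sub_norm_le (gradient F x) g
          linarith [hg]
        have h2 : 4 * ε₂ ≤ ‖g‖ := by
          have := mul_le_mul_of_nonneg_right hσ4 hε₂.le
          linarith [hgeq]
        have h3 : ‖gradient F x‖ ≤ (5 / 4) * ‖g‖ := by linarith
        have h4 : ‖gradient F x‖ * ‖gradient F x‖ ≤ ((5 / 4) * ‖g‖) * ((5 / 4) * ‖g‖) :=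
          mul_le_mul h3 h3 (norm_nonneg _) (by positivity)
        linarith [h4]
      have hD : 0 ≤ F x - F xstar := sub_nonneg.mpr (hmin x)
      have hpg : ⟪p, g⟫ = -⟪H p, p⟫ := by rw [real_inner_comm]; exact hgp
      rw [hpg] at harm
      exact rate_final γ β α Khat ⟪H p, p⟫ ‖g‖ (F (x + α • p)) (F x) (F xstar)
        ‖gradient F x‖ hγ hβ hα hKhat_pos harm hgnorm2 hpl hgF2 hD
end

section
/- Let F : ℝ^p → ℝ be twice continuously differentiable with ∇²F L-Lipschitz (‖∇²F(x) − ∇²F(y)‖ ≤ L‖x−y‖). Let 0 < ε₁ < 1, 0 < β < 1/2 with 1 − 2ε₁ − 2(1−ε₁)β > 0, γ > 0, K̂ ≥ γ, κ̃ = K̂/γ, and set q = 3(1−ε₁)γ²(1 − 2ε₁ − 2(1−ε₁)β). Suppose ε₂ > 0 satisfies ε₂ ≤ 3√(1−ε₁) γ² (1 − 2ε₁ − 2(1−ε₁)β)² / (8 L √κ̃), and define q₁ = (q − √(q² − 24(1−ε₁)^{3/2} γ² L ε₂ √κ̃))/(2L) and q₂ = (q + √(q² − 24(1−ε₁)^{3/2}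 γ² L ε₂ √κ̃))/(2L). Let x ∈ ℝ^p and H be a symmetric matrix with (1−ε₁)γ·I ⪯ H ⪯ K̂·I and ‖H − ∇²F(x)‖ ≤ ε₁γ, and let g ∈ ℝ^p satisfy ‖∇F(x) − g‖ ≤ ε₂. If q₁ ≤ ‖g‖ ≤ q₂ and p = −H⁻¹g, then F(x + p) ≤ F(x) + β pᵀg; i.e., the unit step size α = 1 satisfies the Armijo condition with respect to g. -/
open scoped RealInnerProductSpace

set_option maxHeartbeats 1000000 in
theorem taylor2 {d : ℕ} (F : EuclideanSpace ℝ (Fin d) → ℝ) (L : ℝ)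
    (x p : EuclideanSpace ℝ (Fin d))
    (hFC : ContDiff ℝ 2 F) (hL : 0 ≤ L)
    (hLip : ∀ a b, ‖hess F a - hess F b‖ ≤ L * ‖a - b‖) :
    F (x + p) ≤ F x + ⟪gradient F x, p⟫ + (1/2) * ⟪hess F x p, p⟫ + L/6 * ‖p‖^3 := by
  have hFd : Differentiable ℝ F := hFC.differentiable (by norm_num)
  have hgc : ContDiff ℝ 1 (gradient F) := by
    have h1 : ContDiff ℝ 1 (fderiv ℝ F) := hFC.fderiv_right (by norm_num)
    exact ((InnerProductSpace.toDual ℝ (EuclideanSpace ℝ (Fin d))).symm.contDiff).comp h1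
  have hgd : ∀ y, HasFDerivAt (gradient F) (hess F y) y := fun y =>
    ((hgc.differentiable one_ne_zero) y).hasFDerivAt
  set t := ‖p‖ with ht
  set c : ℝ → EuclideanSpace ℝ (Fin d) := fun τ => x + τ • p with hcdef
  have hc : ∀ τ : ℝ, HasDerivAt c p τ := by
    intro τ
    have h := ((hasDerivAt_id τ).smul_const p).const_add x
    rw [one_smul] at h
    exact h
  have hA : ∀ τ : ℝ, HasDerivAt (fun s => gradient F (c s)) (hess F (c τ) p) τ := by
    intro τ
    exact (hgd (c τ)).comp_hasDerivAt τ (hc τ)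
  have hf1 : ∀ τ : ℝ, HasDerivAt (fun s => F (c s)) ⟪gradient F (c τ), p⟫ τ := by
    intro τ
    have h := (hFd (c τ)).hasFDerivAt.comp_hasDerivAt τ (hc τ)
    have e : fderiv ℝ F (c τ) p = ⟪gradient F (c τ), p⟫ := by
      rw [gradient, InnerProductSpace.toDual_symm_apply]
    rwa [e] at h
  -- vector part
  set V : ℝ → EuclideanSpace ℝ (Fin d) := fun τ => gradient F (c τ) - τ • hess F x p with hVdef
  have hV : ∀ τ : ℝ, HasDerivAt V (hess F (c τ) p - hess F x p) τ := by
    intro τ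
    exact (hA τ).sub (by simpa using (hasDerivAt_id τ).smul_const (hess F x p))
  have hV0 : V 0 = gradient F x := by simp [hVdef, hcdef]
  have keyV : ∀ τ ∈ Set.Icc (0:ℝ) 1, ‖V τ - V 0‖ ≤ L * t^2 / 2 * τ^2 := by
    have hB : ∀ τ : ℝ, HasDerivAt (fun s => L * t^2 / 2 * s^2) (L * t^2 * τ) τ := by
      intro τ
      have := (hasDerivAt_pow 2 τ).const_mul (L * t^2 / 2)
      refine this.congr_deriv ?_
      ring
    have := image_norm_le_of_norm_deriv_right_le_deriv_boundary
      (f := fun τ => V τ - V 0) (f' := fun τ => hess F (c τ) p - hess F x p)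
      (a := 0) (b := 1)
      (B := fun s => L * t^2 / 2 * s^2) (B' := fun τ => L * t^2 * τ)
      (fun τ _ => (((hV τ).sub_const (V 0)).continuousAt).continuousWithinAt)
      (fun τ _ => ((hV τ).sub_const (V 0)).hasDerivWithinAt)
      (by simp) hB ?_
    · exact this
    · intro τ hτ
      have h1 : ‖hess F (c τ) p - hess F x p‖ = ‖(hess F (c τ) - hess F x) p‖ := by
        simp [ContinuousLinearMap.sub_apply]
      rw [h1]
      calc ‖(hess F (c τ) - hess F x) p‖ ≤ ‖hess F (c τ) - hess F x‖ * ‖p‖ :=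
            (hess F (c τ) - hess F x).le_opNorm p
        _ ≤ (L * ‖c τ - x‖) * ‖p‖ := by
            apply mul_le_mul_of_nonneg_right (hLip _ _) (norm_nonneg _)
        _ = L * t^2 * τ := by
            have : c τ - x = τ • p := by simp [hcdef]
            rw [this, norm_smul, Real.norm_eq_abs, abs_of_nonneg hτ.1]
            ring
  -- scalar part
  set ψ : ℝ → ℝ := fun τ =>
    F (c τ) - F (c 0) - τ * ⟪gradient F x, p⟫ - τ^2/2 * ⟪hess F x p, p⟫ with hψdef
  have hψ : ∀ τ : ℝ, HasDerivAt ψ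
      (⟪gradient F (c τ), p⟫ - ⟪gradient F x, p⟫ - τ * ⟪hess F x p, p⟫) τ := by
    intro τ
    have h1 : HasDerivAt (fun s : ℝ => s * ⟪gradient F x, p⟫) ⟪gradient F x, p⟫ τ := by
      simpa using (hasDerivAt_id τ).mul_const ⟪gradient F x, p⟫
    have h2 : HasDerivAt (fun s : ℝ => s^2/2 * ⟪hess F x p, p⟫)
        (τ * ⟪hess F x p, p⟫) τ := by
      have := ((hasDerivAt_pow 2 τ).div_const 2).mul_const ⟪hess F x p, p⟫
      refine this.congr_deriv ?_
      push_cast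
      ring
    exact (((hf1 τ).sub_const (F (c 0))).sub h1).sub h2
  have keyψ : ∀ τ ∈ Set.Icc (0:ℝ) 1, ‖ψ τ‖ ≤ L * t^3 / 6 * τ^3 := by
    have hB : ∀ τ : ℝ, HasDerivAt (fun s => L * t^3 / 6 * s^3) (L * t^3 / 2 * τ^2) τ := by
      intro τ
      have := (hasDerivAt_pow 3 τ).const_mul (L * t^3 / 6)
      refine this.congr_deriv ?_
      push_cast
      ring
    apply image_norm_le_of_norm_deriv_right_le_deriv_boundary
      (f := ψ) (f' := fun τ => ⟪gradient F (c τ), p⟫ - ⟪gradient F x, p⟫ - τ * ⟪hess F x p, p⟫)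
      (fun τ _ => ((hψ τ).continuousAt).continuousWithinAt)
      (fun τ _ => (hψ τ).hasDerivWithinAt)
      (by simp [hψdef]) hB
    intro τ hτ
    have e : ⟪gradient F (c τ), p⟫ - ⟪gradient F x, p⟫ - τ * ⟪hess F x p, p⟫
        = ⟪V τ - V 0, p⟫ := by
      rw [hV0]
      simp only [hVdef, inner_sub_left, real_inner_smul_left]
      ring
    rw [e, Real.norm_eq_abs]
    calc |⟪V τ - V 0, p⟫| ≤ ‖V τ - V 0‖ * ‖p‖ := abs_real_inner_le_norm _ _
      _ ≤ (L * t^2 / 2 * τ^2) * t :=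
          mul_le_mul_of_nonneg_right (keyV τ ⟨hτ.1, hτ.2.le⟩) (norm_nonneg _)
      _ = L * t^3 / 2 * τ^2 := by ring
  have h1 := keyψ 1 ⟨zero_le_one, le_rfl⟩
  have h2 : ψ 1 ≤ L * t^3 / 6 := by
    have := (le_abs_self (ψ 1)).trans (by simpa [Real.norm_eq_abs] using h1)
    linarith
  have hc1 : c 1 = x + p := by simp [hcdef]
  have hc0 : c 0 = x := by simp [hcdef]
  rw [hψdef] at h2
  simp only [hc1, hc0] at h2
  linarith [h2]

private lemma alg_cancel {K A B : ℝ} (hK : 0 < K) (h : K * A ≤ K * B) : A ≤ B :=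
  (mul_le_mul_iff_right₀ hK).mp h

private lemma alg_tG (a γ t G hh : ℝ) (h1 : a * γ * t ^ 2 ≤ hh) (h2 : hh ≤ G * t)
    (ht : 0 < t) : a * γ * t ≤ G := by nlinarith

private lemma alg_kh (K hh G X : ℝ) (hK : 0 < K)
    (s1 : 0 ≤ K ^ 2 * hh - 2 * K * G ^ 2 + X) (hX : X ≤ K * G ^ 2) : G ^ 2 ≤ K * hh := by
  nlinarith

private lemma alg_D0 (ε₁ γ L S sa cc ε₂ : ℝ) (ha : 0 < 1 - ε₁) (hsa2 : sa ^ 2 = 1 - ε₁)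
    (hsa0 : 0 < sa) (hγ : 0 < γ) (hL : 0 < L) (hS : 0 < S) (hε₂ : 0 < ε₂)
    (hε₂' : ε₂ * (8 * L * S) ≤ 3 * sa * γ ^ 2 * cc ^ 2) :
    0 ≤ (3 * (1 - ε₁) * γ ^ 2 * cc) ^ 2 - 24 * ((1 - ε₁) * sa) * γ ^ 2 * L * ε₂ * S := by
  have hmul := mul_le_mul_of_nonneg_left hε₂'
    (show (0:ℝ) ≤ 3 * (1 - ε₁) * γ ^ 2 * sa by positivity)
  have hb : 9 * (1 - ε₁) * sa ^ 2 * γ ^ 4 * cc ^ 2 = 9 * (1 - ε₁) ^ 2 * γ ^ 4 * cc ^ 2 := by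
    linear_combination (9 * (1 - ε₁) * γ ^ 4 * cc ^ 2) * hsa2
  nlinarith [hmul, hb]

private lemma alg_star (q G L B sd : ℝ) (hL : 0 < L) (hsd2 : sd ^ 2 = q ^ 2 - 4 * L * B)
    (h1 : q - sd ≤ G * (2 * L)) (h2 : G * (2 * L) ≤ q + sd) :
    L * G ^ 2 - q * G + B ≤ 0 := by
  have hprod : 0 ≤ (sd - (2 * L * G - q)) * (sd + (2 * L * G - q)) := by
    apply mul_nonneg <;> linarith
  nlinarith [hprod, hsd2, hL]

private lemma alg_TB (L G sa S γ cc ε₁ ε₂ : ℝ) (hsa0 : 0 < sa) (hS0 : 0 < S)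
    (hsaS : sa ≤ S) (hsa2 : sa ^ 2 = 1 - ε₁) (hL : 0 < L) (hccG : 0 ≤ cc * G)
    (hstar : L * G ^ 2 - 3 * (1 - ε₁) * γ ^ 2 * cc * G + 6 * (1 - ε₁) * sa * γ ^ 2 * ε₂ * S ≤ 0) :
    L * G ^ 2 - 3 * sa * S * γ ^ 2 * cc * G + 6 * (1 - ε₁) * γ ^ 2 * S ^ 2 * ε₂ ≤ 0 := by
  have h1 : S * (L * G ^ 2 - 3 * (1 - ε₁) * γ ^ 2 * cc * G
      + 6 * (1 - ε₁) * sa * γ ^ 2 * ε₂ * S) ≤ 0 :=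
    mul_nonpos_of_nonneg_of_nonpos hS0.le hstar
  have hbr : sa ^ 2 * (3 * S * γ ^ 2 * cc * G) = (1 - ε₁) * (3 * S * γ ^ 2 * cc * G) := by
    rw [hsa2]
  have hLG : 0 ≤ (S - sa) * L * G ^ 2 :=
    mul_nonneg (mul_nonneg (by linarith) hL.le) (sq_nonneg G)
  nlinarith [h1, hbr, hLG, hsa0]

private lemma alg_starA (L G sa S γ cc ε₁ ε₂ : ℝ) (ha : 0 < 1 - ε₁) (hsa0 : 0 < sa)
    (hsaS : sa ≤ S) (hsa2 : sa ^ 2 = 1 - ε₁) (hγ : 0 < γ) (hε₂ : 0 < ε₂)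
    (hstar : L * G ^ 2 - 3 * (1 - ε₁) * γ ^ 2 * cc * G + 6 * (1 - ε₁) * sa * γ ^ 2 * ε₂ * S ≤ 0) :
    L * G ^ 2 - 3 * (1 - ε₁) * γ ^ 2 * cc * G + 6 * (1 - ε₁) ^ 2 * γ ^ 2 * ε₂ ≤ 0 := by
  have hbr : (1 - ε₁) * sa ^ 2 = (1 - ε₁) * (1 - ε₁) := by rw [hsa2]
  have hle : (1 - ε₁) ^ 2 ≤ (1 - ε₁) * sa * S := by
    have h0 : 0 ≤ (1 - ε₁) * sa * (S - sa) :=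
      mul_nonneg (mul_nonneg ha.le hsa0.le) (by linarith)
    nlinarith [h0, hbr]
  have := mul_le_mul_of_nonneg_left hle (show (0:ℝ) ≤ 6 * γ ^ 2 * ε₂ by positivity)
  nlinarith [hstar, this]

private lemma alg_interp (L γ cc ε₂ t e1 e2 : ℝ) (hL : 0 < L)
    (Q : L * e1 ^ 2 - 3 * γ * cc * e1 + 6 * ε₂ ≤ 0)
    (QA : L * e2 ^ 2 - 3 * γ * cc * e2 + 6 * ε₂ ≤ 0)
    (h1 : 0 ≤ t - e1) (h2 : 0 ≤ e2 - t) (hlt : 0 < e2 - e1) :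
    L * t ^ 2 - 3 * γ * cc * t + 6 * ε₂ ≤ 0 := by
  nlinarith [mul_nonneg h1 h2, Q, QA, h1, h2, hlt,
    mul_nonneg (mul_nonneg (mul_nonneg h1 h2) hlt.le) hL.le]

private lemma alg_caseA (a γ L cc ε₂ t hh : ℝ) (ha : 0 < a) (hγ : 0 < γ) (hc : 0 < cc)
    (ht : 0 ≤ t) (interp : L * t ^ 2 - 3 * γ * cc * t + 6 * ε₂ ≤ 0)
    (hlow : a * γ * t ^ 2 ≤ hh) : 6 * a * ε₂ * t + a * L * t ^ 3 ≤ 3 * cc * hh := by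
  have h1 := mul_le_mul_of_nonneg_left interp (mul_nonneg ha.le ht)
  have h2 := mul_le_mul_of_nonneg_left hlow (show (0:ℝ) ≤ 3 * cc by linarith)
  nlinarith [h1, h2]

private lemma alg_caseB (a γ L cc ε₂ t e1 hh : ℝ) (ha : 0 < a) (hγ : 0 < γ) (hc : 0 < cc)
    (hL : 0 < L) (hε₂ : 0 < ε₂) (ht : 0 ≤ t) (hte1 : t ≤ e1)
    (Q : L * e1 ^ 2 - 3 * γ * cc * e1 + 6 * ε₂ ≤ 0)
    (hlow1 : a * γ * e1 ^ 2 ≤ hh) : 6 * a * ε₂ * t + a * L * t ^ 3 ≤ 3 * cc * hh := by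
  have he1 : 0 ≤ e1 := le_trans ht hte1
  have hQ := mul_le_mul_of_nonneg_left Q (mul_nonneg ha.le he1)
  have h3 : t ^ 3 ≤ e1 ^ 3 := pow_le_pow_left₀ ht hte1 3
  have hlowcc := mul_le_mul_of_nonneg_left hlow1 (show (0:ℝ) ≤ 3 * cc by linarith)
  have m1 : 6 * a * ε₂ * t ≤ 6 * a * ε₂ * e1 := by
    nlinarith [mul_nonneg (mul_nonneg ha.le hε₂.le) (sub_nonneg.2 hte1)]
  have m2 : a * L * t ^ 3 ≤ a * L * e1 ^ 3 :=
    mul_le_mul_of_nonneg_left h3 (mul_nonneg ha.le hL.le)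
  nlinarith [hQ, m1, m2, hlowcc]

private lemma alg_h6 (ε₁ β γ L cc ε₂ t hh : ℝ)
    (hmm6 : 6 * (1 - ε₁) * ε₂ * t + (1 - ε₁) * L * t ^ 3 ≤ 3 * cc * hh)
    (hlow : (1 - ε₁) * γ * t ^ 2 ≤ hh) (hε₁ : 0 < ε₁)
    (hccdef : cc = 1 - 2 * ε₁ - 2 * (1 - ε₁) * β) :
    6 * (1 - ε₁) * (ε₂ * t + ε₁ * γ * t ^ 2 / 2 + L * t ^ 3 / 6)
      ≤ 6 * (1 - ε₁) * ((1/2 - β) * hh) := by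
  have hlow3 := mul_le_mul_of_nonneg_left hlow (show (0:ℝ) ≤ 3 * ε₁ by linarith)
  have hccH : 3 * cc * hh + 3 * ε₁ * hh = (3 * (1 - ε₁) - 6 * (1 - ε₁) * β) * hh := by
    linear_combination (3 * hh) * hccdef
  linarith [hmm6, hlow3, hccH]

private lemma alg_dd (γ sa S ε₁ : ℝ) (hγ : 0 < γ) (hsa0 : 0 < sa) (hsa2 : sa ^ 2 = 1 - ε₁)
    (hsa1 : sa < 1) (hS1 : 1 ≤ S) : (1 - ε₁) * γ < sa * γ * S := by
  have hb : (1 - ε₁) * γ = sa ^ 2 * γ := by rw [hsa2]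
  have h1 : sa ^ 2 * γ < sa * γ := by nlinarith [mul_pos (mul_pos hsa0 hγ) (sub_pos.2 hsa1)]
  have h2 : sa * γ ≤ sa * γ * S := by nlinarith [mul_pos hsa0 hγ, hS1]
  linarith [hb, h1, h2]

private lemma alg_sa1 (sa ε₁ : ℝ) (hsa0 : 0 < sa) (hsa2 : sa ^ 2 = 1 - ε₁) (hε₁ : 0 < ε₁) :
    sa < 1 := by nlinarith

set_option maxHeartbeats 1000000 in
theorem stmt_11 {d : ℕ} (F : EuclideanSpace ℝ (Fin d) → ℝ)
    (γ Khat L ε₁ ε₂ β q q₁ q₂ : ℝ) (x p g : EuclideanSpace ℝ (Fin d))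
    (H : EuclideanSpace ℝ (Fin d) →L[ℝ] EuclideanSpace ℝ (Fin d))
    -- `F` is twice continuously differentiable with `L`-Lipschitz Hessian, `L > 0`
    (hFC : ContDiff ℝ 2 F) (hL : 0 < L)
    (hLip : ∀ a b, ‖hess F a - hess F b‖ ≤ L * ‖a - b‖)
    (hε₁ : 0 < ε₁) (hε₁1 : ε₁ < 1) (hβ : 0 < β) (hβhalf : β < 1 / 2)
    (hcond : 1 - 2 * ε₁ - 2 * (1 - ε₁) * β > 0)
    (hγ : 0 < γ) (hKγ : γ ≤ Khat)
    -- `q = 3(1-ε₁)γ²(1 - 2ε₁ - 2(1-ε₁)β)`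
    (hq : q = 3 * (1 - ε₁) * γ ^ 2 * (1 - 2 * ε₁ - 2 * (1 - ε₁) * β))
    -- `ε₂ ≤ 3√(1-ε₁) γ² (1-2ε₁-2(1-ε₁)β)² / (8L√κ̃)`, `κ̃ = Khat/γ`
    (hε₂ : 0 < ε₂)
    (hε₂le : ε₂ ≤ 3 * Real.sqrt (1 - ε₁) * γ ^ 2 * (1 - 2 * ε₁ - 2 * (1 - ε₁) * β) ^ 2 /
        (8 * L * Real.sqrt (Khat / γ)))
    -- `q₁, q₂` as defined
    (hq₁ : q₁ = (q - Real.sqrt (q ^ 2 -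
        24 * (1 - ε₁) ^ ((3 : ℝ) / 2) * γ ^ 2 * L * ε₂ * Real.sqrt (Khat / γ))) / (2 * L))
    (hq₂ : q₂ = (q + Real.sqrt (q ^ 2 -
        24 * (1 - ε₁) ^ ((3 : ℝ) / 2) * γ ^ 2 * L * ε₂ * Real.sqrt (Khat / γ))) / (2 * L))
    -- `H` is symmetric with `(1-ε₁)γ I ⪯ H ⪯ Khat I` and `‖H - ∇²F(x)‖ ≤ ε₁γ`
    (hHsym : ∀ u v, ⟪H u, v⟫ = ⟪u, H v⟫)
    (hHlow : ∀ v, (1 - ε₁) * γ * ‖v‖ ^ 2 ≤ ⟪H v, v⟫)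
    (hHup : ∀ v, ⟪H v, v⟫ ≤ Khat * ‖v‖ ^ 2)
    (hnear : ‖H - hess F x‖ ≤ ε₁ * γ)
    -- `g` approximates `∇F(x)` within `ε₂`
    (hg : ‖gradient F x - g‖ ≤ ε₂)
    -- `q₁ ≤ ‖g‖ ≤ q₂`
    (hglow : q₁ ≤ ‖g‖) (hgup : ‖g‖ ≤ q₂)
    -- `p = -H⁻¹ g`
    (hp : H p = -g) :
    -- the unit step size satisfies the Armijo condition w.r.t. `g`
    F (x + p) ≤ F x + β * ⟪p, g⟫ := by
  have ha0 : (0:ℝ) < 1 - ε₁ := by linarith only [hε₁1]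
  set cc := 1 - 2 * ε₁ - 2 * (1 - ε₁) * β with hcc
  set sa := Real.sqrt (1 - ε₁) with hsa
  set S := Real.sqrt (Khat / γ) with hSdef
  set t := ‖p‖ with ht
  set G := ‖g‖ with hGdef
  have hc0 : 0 < cc := hcond
  have hsa0 : 0 < sa := Real.sqrt_pos.2 ha0
  have hsa2 : sa ^ 2 = 1 - ε₁ := Real.sq_sqrt ha0.le
  have hsa1 : sa < 1 := alg_sa1 sa ε₁ hsa0 hsa2 hε₁
  have hK0 : 0 < Khat := lt_of_lt_of_le hγ hKγ
  have hS1 : (1:ℝ) ≤ S := Real.one_le_sqrt.2 ((one_le_div hγ).2 hKγ)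
  have hS0 : 0 < S := lt_of_lt_of_le one_pos hS1
  have hS2 : γ * S ^ 2 = Khat := by
    rw [hSdef, Real.sq_sqrt (by positivity)]
    field_simp
  have hsaS : sa ≤ S := le_trans hsa1.le hS1
  have ht0' : 0 ≤ t := norm_nonneg p
  have hG0 : 0 ≤ G := norm_nonneg g
  have hrpow : (1 - ε₁) ^ ((3:ℝ)/2) = (1 - ε₁) * sa := by
    rw [show ((3:ℝ)/2) = (1/2) * 3 by norm_num, Real.rpow_mul ha0.le, ← Real.sqrt_eq_rpow,
      show ((3:ℝ)) = ((3:ℕ):ℝ) by norm_num, Real.rpow_natCast, ← hsa]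
    linear_combination sa * hsa2
  rw [hrpow] at hq₁ hq₂
  -- basic inner product facts
  have hnHp : ‖H p‖ = G := by rw [hp, norm_neg]
  have hgp : ⟪g, p⟫ = -⟪H p, p⟫ := by
    have hg' : g = -(H p) := by rw [hp, neg_neg]
    rw [hg', inner_neg_left]
  have hpg : ⟪p, g⟫ = -⟪H p, p⟫ := by rw [real_inner_comm, hgp]
  have hlow : (1 - ε₁) * γ * t ^ 2 ≤ ⟪H p, p⟫ := hHlow p
  have hhh0 : 0 ≤ ⟪H p, p⟫ := le_trans (by positivity) hlow
  have hCS : ⟪H p, p⟫ ≤ G * t := by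
    calc ⟪H p, p⟫ ≤ ‖H p‖ * ‖p‖ := real_inner_le_norm _ _
      _ = G * t := by rw [hnHp]
  -- G^2 ≤ Khat * ⟪H p, p⟫
  have hBB : ⟪H p, H p⟫ = G ^ 2 := by rw [real_inner_self_eq_norm_sq, hnHp]
  have hsymv : ⟪H (H p), p⟫ = G ^ 2 := by rw [hHsym (H p) p]; exact hBB
  have hupHp : ⟪H (H p), H p⟫ ≤ Khat * G ^ 2 := by
    have := hHup (H p)
    rwa [hnHp] at this
  have hKh : G ^ 2 ≤ Khat * ⟪H p, p⟫ := by
    have s1 : 0 ≤ ⟪H (Khat • p - H p), Khat • p - H p⟫ := by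
      refine le_trans ?_ (hHlow _)
      have h0 : (0:ℝ) ≤ ‖Khat • p - H p‖ ^ 2 := by positivity
      have := mul_nonneg (mul_nonneg ha0.le hγ.le) h0
      linarith only [this]
    have hexp : ⟪H (Khat • p - H p), Khat • p - H p⟫
        = Khat ^ 2 * ⟪H p, p⟫ - 2 * Khat * G ^ 2 + ⟪H (H p), H p⟫ := by
      rw [map_sub, map_smul]
      simp only [inner_sub_left, inner_sub_right, real_inner_smul_left, real_inner_smul_right,
        hBB, hsymv]
      ring
    rw [hexp] at s1
    exact alg_kh Khat ⟪H p, p⟫ G ⟪H (H p), H p⟫ hK0 s1 hupHp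
  -- the quadratic fact on G
  have h8 : (0:ℝ) < 8 * L * S := by positivity
  have hε₂' : ε₂ * (8 * L * S) ≤ 3 * sa * γ ^ 2 * cc ^ 2 := by
    rw [← le_div_iff₀ h8]
    exact hε₂le
  have hq0 : 0 ≤ q := by
    rw [hq]
    have : 0 < 3 * (1 - ε₁) * γ ^ 2 * cc := by
      apply mul_pos _ hc0
      positivity
    linarith only [this]
  have hterm0 : 0 ≤ 24 * ((1 - ε₁) * sa) * γ ^ 2 * L * ε₂ * S := by positivity
  have hD0 : 0 ≤ q ^ 2 - 24 * ((1 - ε₁) * sa) * γ ^ 2 * L * ε₂ * S := by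
    rw [hq]
    exact alg_D0 ε₁ γ L S sa cc ε₂ ha0 hsa2 hsa0 hγ hL hS0 hε₂ hε₂'
  have hDle : q ^ 2 - 24 * ((1 - ε₁) * sa) * γ ^ 2 * L * ε₂ * S ≤ q ^ 2 := by linarith
  set D := q ^ 2 - 24 * ((1 - ε₁) * sa) * γ ^ 2 * L * ε₂ * S with hD
  have hsqD : Real.sqrt D ^ 2 = q ^ 2 - 4 * L * (6 * (1 - ε₁) * sa * γ ^ 2 * ε₂ * S) := by
    rw [Real.sq_sqrt hD0, hD]
    ring
  have hsqD0 : 0 ≤ Real.sqrt D := Real.sqrt_nonneg _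
  have hsqDq : Real.sqrt D ≤ q := by
    calc Real.sqrt D ≤ Real.sqrt (q ^ 2) := Real.sqrt_le_sqrt hDle
      _ = q := Real.sqrt_sq hq0
  have h2L : (0:ℝ) < 2 * L := by linarith
  have hGlow : q - Real.sqrt D ≤ G * (2 * L) := by
    rw [hq₁] at hglow
    linarith only [(div_le_iff₀ h2L).mp hglow]
  have hGup : G * (2 * L) ≤ q + Real.sqrt D := by
    rw [hq₂] at hgup
    linarith only [(le_div_iff₀ h2L).mp hgup]
  have hstar0 : L * G ^ 2 - q * G + 6 * (1 - ε₁) * sa * γ ^ 2 * ε₂ * S ≤ 0 :=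
    alg_star q G L (6 * (1 - ε₁) * sa * γ ^ 2 * ε₂ * S) (Real.sqrt D) hL hsqD hGlow hGup
  have hstar : L * G ^ 2 - 3 * (1 - ε₁) * γ ^ 2 * cc * G
      + 6 * (1 - ε₁) * sa * γ ^ 2 * ε₂ * S ≤ 0 := by
    rw [hq] at hstar0
    linarith only [hstar0]
  have TB : L * G ^ 2 - 3 * sa * S * γ ^ 2 * cc * G + 6 * (1 - ε₁) * γ ^ 2 * S ^ 2 * ε₂ ≤ 0 :=
    alg_TB L G sa S γ cc ε₁ ε₂ hsa0 hS0 hsaS hsa2 hL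
      (mul_nonneg hc0.le hG0) hstar
  have hstarA : L * G ^ 2 - 3 * (1 - ε₁) * γ ^ 2 * cc * G + 6 * (1 - ε₁) ^ 2 * γ ^ 2 * ε₂ ≤ 0 :=
    alg_starA L G sa S γ cc ε₁ ε₂ ha0 hsa0 hsaS hsa2 hγ hε₂ hstar
  -- the main scalar inequality
  have mm6 : 6 * (1 - ε₁) * ε₂ * t + (1 - ε₁) * L * t ^ 3 ≤ 3 * cc * ⟪H p, p⟫ := by
    rcases eq_or_lt_of_le ht0' with h0 | ht0
    · rw [← h0]
      have h1 : 0 ≤ 3 * cc * ⟪H p, p⟫ := mul_nonneg (by linarith only [hc0]) hhh0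
      linarith only [h1]
    · have htG : (1 - ε₁) * γ * t ≤ G := alg_tG (1 - ε₁) γ t G ⟪H p, p⟫ hlow hCS ht0
      have hGpos : 0 < G := lt_of_lt_of_le (by positivity) htG
      set e1 := G / (sa * γ * S) with he1def
      set e2 := G / ((1 - ε₁) * γ) with he2def
      have hd1 : (0:ℝ) < sa * γ * S := by positivity
      have hd2 : (0:ℝ) < (1 - ε₁) * γ := by positivity
      have he1 : sa * γ * S * e1 = G := by
        rw [he1def]; field_simp
      have he2 : (1 - ε₁) * γ * e2 = G := by
        rw [he2def]; field_simp
      have hposA : (0:ℝ) < (1 - ε₁) * γ ^ 2 * S ^ 2 := by positivity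
      have hposB : (0:ℝ) < (1 - ε₁) ^ 2 * γ ^ 2 := by positivity
      have Q : L * e1 ^ 2 - 3 * γ * cc * e1 + 6 * ε₂ ≤ 0 := by
        have TB' : (1 - ε₁) * γ ^ 2 * S ^ 2 * (L * e1 ^ 2 - 3 * γ * cc * e1 + 6 * ε₂) ≤
            (1 - ε₁) * γ ^ 2 * S ^ 2 * 0 := by
          rw [mul_zero]
          have hexp : (1 - ε₁) * γ ^ 2 * S ^ 2 * (L * e1 ^ 2 - 3 * γ * cc * e1 + 6 * ε₂)
              = L * G ^ 2 - 3 * sa * S * γ ^ 2 * cc * G + 6 * (1 - ε₁) * γ ^ 2 * S ^ 2 * ε₂ := by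
            rw [← he1, ← hsa2]; ring
          rw [hexp]; exact TB
        exact le_of_mul_le_mul_left TB' hposA
      rcases le_total (sa * γ * S * t) G with hcase | hcase
      · -- small t
        have hte1 : t ≤ e1 := by
          rw [he1def, le_div_iff₀ hd1]
          linarith only [hcase]
        have hlow1 : (1 - ε₁) * γ * e1 ^ 2 ≤ ⟪H p, p⟫ := by
          have hG2 : G ^ 2 = (1 - ε₁) * γ ^ 2 * S ^ 2 * e1 ^ 2 := by
            rw [← he1, ← hsa2]; ring
          have hKh' : (1 - ε₁) * γ ^ 2 * S ^ 2 * e1 ^ 2 ≤ γ * S ^ 2 * ⟪H p, p⟫ := by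
            rw [← hG2, hS2]; exact hKh
          have hposC : (0:ℝ) < γ * S ^ 2 := by positivity
          refine alg_cancel hposC ?_
          calc γ * S ^ 2 * ((1 - ε₁) * γ * e1 ^ 2)
              = (1 - ε₁) * γ ^ 2 * S ^ 2 * e1 ^ 2 := by ring
            _ ≤ γ * S ^ 2 * ⟪H p, p⟫ := hKh'
        exact alg_caseB (1 - ε₁) γ L cc ε₂ t e1 ⟪H p, p⟫ ha0 hγ hc0 hL hε₂ ht0' hte1 Q hlow1
      · -- large t
        have QA : L * e2 ^ 2 - 3 * γ * cc * e2 + 6 * ε₂ ≤ 0 := by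
          have hA' : (1 - ε₁) ^ 2 * γ ^ 2 * (L * e2 ^ 2 - 3 * γ * cc * e2 + 6 * ε₂) ≤
              (1 - ε₁) ^ 2 * γ ^ 2 * 0 := by
            rw [mul_zero]
            have hexp : (1 - ε₁) ^ 2 * γ ^ 2 * (L * e2 ^ 2 - 3 * γ * cc * e2 + 6 * ε₂)
                = L * G ^ 2 - 3 * (1 - ε₁) * γ ^ 2 * cc * G + 6 * (1 - ε₁) ^ 2 * γ ^ 2 * ε₂ := by
              rw [← he2]; ring
            rw [hexp]; exact hstarA
          exact le_of_mul_le_mul_left hA' hposB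
        have he1t : 0 ≤ t - e1 := by
          rw [he1def, sub_nonneg, div_le_iff₀ hd1]
          linarith only [hcase]
        have hte2 : 0 ≤ e2 - t := by
          rw [he2def, sub_nonneg, le_div_iff₀ hd2]
          linarith only [htG]
        have hdd : (1 - ε₁) * γ < sa * γ * S := alg_dd γ sa S ε₁ hγ hsa0 hsa2 hsa1 hS1
        have he12 : 0 < e2 - e1 := by
          rw [he1def, he2def, sub_pos, div_lt_div_iff₀ hd1 hd2]
          exact mul_lt_mul_of_pos_left hdd hGpos
        have interp : L * t ^ 2 - 3 * γ * cc * t + 6 * ε₂ ≤ 0 :=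
          alg_interp L γ cc ε₂ t e1 e2 hL Q QA he1t hte2 he12
        exact alg_caseA (1 - ε₁) γ L cc ε₂ t ⟪H p, p⟫ ha0 hγ hc0 ht0' interp hlow
  -- assemble with the Taylor estimate
  have key1 := taylor2 F L x p hFC hL.le hLip
  rw [← ht] at key1
  have hgrad : ⟪gradient F x, p⟫ ≤ -⟪H p, p⟫ + ε₂ * t := by
    have h1 : ⟪gradient F x - g, p⟫ ≤ ε₂ * t := by
      calc ⟪gradient F x - g, p⟫ ≤ ‖gradient F x - g‖ * ‖p‖ := real_inner_le_norm _ _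
        _ ≤ ε₂ * t := mul_le_mul_of_nonneg_right hg ht0'
    rw [inner_sub_left] at h1
    linarith only [h1, hgp.le, hgp.ge]
  have hhess : ⟪hess F x p, p⟫ ≤ ⟪H p, p⟫ + ε₁ * γ * t ^ 2 := by
    have h1 : |⟪(H - hess F x) p, p⟫| ≤ ε₁ * γ * t ^ 2 := by
      have ha := abs_real_inner_le_norm ((H - hess F x) p) p
      have hb := mul_le_mul_of_nonneg_right ((H - hess F x).le_opNorm p) (norm_nonneg p)
      have hc2 := mul_le_mul_of_nonneg_right
        (mul_le_mul_of_nonneg_right hnear (norm_nonneg p)) (norm_nonneg p)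
      rw [← ht] at ha hb hc2
      nlinarith only [ha, hb, hc2]
    rw [ContinuousLinearMap.sub_apply, inner_sub_left] at h1
    have h2 := (abs_le.mp h1).1
    linarith only [h2]
  have hfin : ε₂ * t + ε₁ * γ * t ^ 2 / 2 + L * t ^ 3 / 6 ≤ (1/2 - β) * ⟪H p, p⟫ := by
    have h6 := alg_h6 ε₁ β γ L cc ε₂ t ⟪H p, p⟫ mm6 hlow hε₁ hcc
    exact (mul_le_mul_iff_right₀ (show (0:ℝ) < 6 * (1 - ε₁) by linarith only [ha0])).mp h6
  rw [hpg]
  linarith only [key1, hgrad, hhess, hfin]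
end

section
/- Let H be a symmetric p×p matrix with μ·I ⪯ H ⪯ K̂·I for some 0 < μ ≤ K̂, let g ∈ ℝ^p, 0 ≤ θ₁ ≤ √μ/(2√K̂), and let p ∈ ℝ^p satisfy ‖Hp + g‖ ≤ θ₁‖g‖. Then pᵀg ≤ −(1/2) gᵀH⁻¹g ≤ −‖g‖²/(2K̂). -/
open scoped RealInnerProductSpace
open Matrix

section aux
variable {d : ℕ}

lemma aux_cs0 (v w : Fin d → ℝ) : (v ⬝ᵥ w) ^ 2 ≤ (v ⬝ᵥ v) * (w ⬝ᵥ w) := by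
  simpa [dotProduct, sq] using Finset.sum_mul_sq_le_sq_mul_sq Finset.univ v w

lemma aux_cs (A : Matrix (Fin d) (Fin d) ℝ) (hA : A.PosSemidef) (v w : Fin d → ℝ) :
    (v ⬝ᵥ A *ᵥ w) ^ 2 ≤ (v ⬝ᵥ A *ᵥ v) * (w ⬝ᵥ A *ᵥ w) := by
  obtain ⟨B, rfl⟩ := by open scoped MatrixOrder in exact CStarAlgebra.nonneg_iff_eq_star_mul_self.mp hA.nonneg
  simp only [Matrix.star_eq_conjTranspose]
  have key : ∀ x y : Fin d → ℝ, x ⬝ᵥ (Bᴴ * B) *ᵥ y = (B *ᵥ x) ⬝ᵥ (B *ᵥ y) := by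
    intro x y
    rw [← Matrix.mulVec_mulVec, Matrix.dotProduct_mulVec, Matrix.conjTranspose_eq_transpose_of_trivial,
      Matrix.vecMul_transpose]
  rw [key, key, key]
  exact aux_cs0 _ _

end aux

lemma aux_low {H : Matrix (Fin d) (Fin d) ℝ} {μ : ℝ}
    (hlow : (H - μ • (1 : Matrix (Fin d) (Fin d) ℝ)).PosSemidef) (v : Fin d → ℝ) :
    μ * (v ⬝ᵥ v) ≤ v ⬝ᵥ H *ᵥ v := by
  have := hlow.dotProduct_mulVec_nonneg v
  simp only [star_trivial, Matrix.sub_mulVec, Matrix.smul_mulVec, Matrix.one_mulVec,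
    dotProduct_sub, dotProduct_smul, smul_eq_mul] at this
  linarith

lemma aux_up {H : Matrix (Fin d) (Fin d) ℝ} {Khat : ℝ}
    (hup : (Khat • (1 : Matrix (Fin d) (Fin d) ℝ) - H).PosSemidef) (v : Fin d → ℝ) :
    v ⬝ᵥ H *ᵥ v ≤ Khat * (v ⬝ᵥ v) := by
  have := hup.dotProduct_mulVec_nonneg v
  simp only [star_trivial, Matrix.sub_mulVec, Matrix.smul_mulVec, Matrix.one_mulVec,
    dotProduct_sub, dotProduct_smul, smul_eq_mul] at this
  linarith

lemma aux_dp_self_nonneg (v : Fin d → ℝ) : (0:ℝ) ≤ v ⬝ᵥ v :=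
  Finset.sum_nonneg fun i _ => mul_self_nonneg _

lemma aux_inv_low {H : Matrix (Fin d) (Fin d) ℝ} {Khat : ℝ} (hK : 0 < Khat)
    (hH : H.PosDef) (hHsym : H.IsSymm)
    (hup : (Khat • (1 : Matrix (Fin d) (Fin d) ℝ) - H).PosSemidef) (v : Fin d → ℝ) :
    (v ⬝ᵥ v) / Khat ≤ v ⬝ᵥ H⁻¹ *ᵥ v := by
  have hN : (H⁻¹).PosDef := hH.inv
  have hHy : H *ᵥ (H⁻¹ *ᵥ v) = v := by
    rw [Matrix.mulVec_mulVec, Matrix.mul_nonsing_inv _ (isUnit_iff_isUnit_det _ |>.mp hH.isUnit),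
      Matrix.one_mulVec]
  have h1 : (H⁻¹ *ᵥ v) ⬝ᵥ H *ᵥ v = v ⬝ᵥ v := by
    rw [Matrix.dotProduct_mulVec, ← Matrix.mulVec_transpose, hHsym.eq, hHy]
  have h2 : (H⁻¹ *ᵥ v) ⬝ᵥ H *ᵥ (H⁻¹ *ᵥ v) = v ⬝ᵥ H⁻¹ *ᵥ v := by
    rw [hHy, dotProduct_comm]
  have hcs := aux_cs H hH.posSemidef (H⁻¹ *ᵥ v) v
  rw [h1, h2] at hcs
  have hup' := aux_up hup v
  have hvv : (0:ℝ) ≤ v ⬝ᵥ v := aux_dp_self_nonneg v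
  have hQ : (0:ℝ) ≤ v ⬝ᵥ H⁻¹ *ᵥ v := by simpa using hN.posSemidef.dotProduct_mulVec_nonneg v
  rw [div_le_iff₀ hK]
  nlinarith [mul_le_mul_of_nonneg_left hup' hQ, mul_nonneg hQ hK.le]

lemma aux_inv_up {H : Matrix (Fin d) (Fin d) ℝ} {μ : ℝ} (hμ : 0 < μ)
    (hH : H.PosDef)
    (hlow : (H - μ • (1 : Matrix (Fin d) (Fin d) ℝ)).PosSemidef) (v : Fin d → ℝ) :
    v ⬝ᵥ H⁻¹ *ᵥ v ≤ (v ⬝ᵥ v) / μ := by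
  have hN : (H⁻¹).PosDef := hH.inv
  have hHy : H *ᵥ (H⁻¹ *ᵥ v) = v := by
    rw [Matrix.mulVec_mulVec, Matrix.mul_nonsing_inv _ (isUnit_iff_isUnit_det _ |>.mp hH.isUnit),
      Matrix.one_mulVec]
  have hQ : (0:ℝ) ≤ v ⬝ᵥ H⁻¹ *ᵥ v := by simpa using hN.posSemidef.dotProduct_mulVec_nonneg v
  have h1 : μ * ((H⁻¹ *ᵥ v) ⬝ᵥ (H⁻¹ *ᵥ v)) ≤ v ⬝ᵥ (H⁻¹ *ᵥ v) := by
    have := aux_low hlow (H⁻¹ *ᵥ v)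
    rw [hHy] at this
    rwa [dotProduct_comm (H⁻¹ *ᵥ v) v] at this
  have hcs := aux_cs0 v (H⁻¹ *ᵥ v)
  have hvv : (0:ℝ) ≤ v ⬝ᵥ v := aux_dp_self_nonneg v
  rw [le_div_iff₀ hμ]
  nlinarith [mul_le_mul_of_nonneg_left h1 hvv, mul_le_mul_of_nonneg_left hcs hμ.le]

theorem stmt_14 {d : ℕ} (H : Matrix (Fin d) (Fin d) ℝ) (μ Khat θ₁ : ℝ)
    (g p : EuclideanSpace ℝ (Fin d))
    -- `H` is symmetric with `μ I ⪯ H ⪯ Khat I`, `0 < μ ≤ Khat`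
    (hHsym : H.IsSymm) (hμ : 0 < μ) (hμK : μ ≤ Khat)
    (hlow : (H - μ • (1 : Matrix (Fin d) (Fin d) ℝ)).PosSemidef)
    (hup : (Khat • (1 : Matrix (Fin d) (Fin d) ℝ) - H).PosSemidef)
    -- `0 ≤ θ₁ ≤ √μ / (2√Khat)`
    (hθ₁0 : 0 ≤ θ₁) (hθ₁le : θ₁ ≤ Real.sqrt μ / (2 * Real.sqrt Khat))
    -- `‖Hp + g‖ ≤ θ₁ ‖g‖`
    (hp : ‖Matrix.toEuclideanLin H p + g‖ ≤ θ₁ * ‖g‖) :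
    -- `pᵀg ≤ -(1/2) gᵀH⁻¹g ≤ -‖g‖²/(2 Khat)`
    ⟪p, g⟫ ≤ -(1 / 2) * ⟪g, Matrix.toEuclideanLin H⁻¹ g⟫ ∧
    -(1 / 2) * ⟪g, Matrix.toEuclideanLin H⁻¹ g⟫ ≤ -‖g‖ ^ 2 / (2 * Khat) := by
  have hK : 0 < Khat := lt_of_lt_of_le hμ hμK
  -- H is positive definite
  have hH : H.PosDef := by
    have heq : (H - μ • 1) + μ • 1 = H := sub_add_cancel _ _
    rw [← heq]
    refine Matrix.PosDef.posSemidef_add hlow ?_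
    rw [Matrix.smul_one_eq_diagonal]
    exact Matrix.posDef_diagonal_iff.mpr fun _ => hμ
  have hN : (H⁻¹).PosDef := hH.inv
  set gv : Fin d → ℝ := (WithLp.equiv 2 (Fin d → ℝ)) g with hgv
  set pv : Fin d → ℝ := (WithLp.equiv 2 (Fin d → ℝ)) p with hpv
  set r : EuclideanSpace ℝ (Fin d) := Matrix.toEuclideanLin H p + g with hr
  set rv : Fin d → ℝ := (WithLp.equiv 2 (Fin d → ℝ)) r with hrv
  have hrv' : rv = H *ᵥ pv + gv := rfl
  -- inner products as dot products
  have hinner : ∀ x y : EuclideanSpace ℝ (Fin d),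
      ⟪x, y⟫ = (WithLp.equiv 2 (Fin d → ℝ)) x ⬝ᵥ (WithLp.equiv 2 (Fin d → ℝ)) y := by
    intro x y
    rw [EuclideanSpace.inner_eq_star_dotProduct]
    simp
    exact dotProduct_comm _ _
  have hQdef : ⟪g, Matrix.toEuclideanLin H⁻¹ g⟫ = gv ⬝ᵥ H⁻¹ *ᵥ gv := by
    rw [hinner]; rfl
  have hGg : ‖g‖ ^ 2 = gv ⬝ᵥ gv := by
    rw [← real_inner_self_eq_norm_sq, hinner]
  have hGr : ‖r‖ ^ 2 = rv ⬝ᵥ rv := by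
    rw [← real_inner_self_eq_norm_sq, hinner]
  have hgvnn : (0:ℝ) ≤ gv ⬝ᵥ gv := aux_dp_self_nonneg gv
  -- ‖r‖² ≤ θ₁² (g⬝g)
  have hr2 : rv ⬝ᵥ rv ≤ θ₁ ^ 2 * (gv ⬝ᵥ gv) := by
    calc rv ⬝ᵥ rv = ‖r‖ ^ 2 := hGr.symm
      _ ≤ (θ₁ * ‖g‖) ^ 2 := pow_le_pow_left₀ (norm_nonneg _) hp 2
      _ = θ₁ ^ 2 * (gv ⬝ᵥ gv) := by rw [mul_pow, hGg]
  -- θ₁² ≤ μ / (4 Khat)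
  have hθsq : θ₁ ^ 2 ≤ μ / (4 * Khat) := by
    have h1 : θ₁ ^ 2 ≤ (Real.sqrt μ / (2 * Real.sqrt Khat)) ^ 2 :=
      pow_le_pow_left₀ hθ₁0 hθ₁le 2
    have h2 : (Real.sqrt μ / (2 * Real.sqrt Khat)) ^ 2 = μ / (4 * Khat) := by
      rw [div_pow, mul_pow, Real.sq_sqrt hμ.le, Real.sq_sqrt hK.le]
      norm_num
    linarith
  -- decomposition p = H⁻¹ r - H⁻¹ g
  have hpdec : pv = H⁻¹ *ᵥ rv - H⁻¹ *ᵥ gv := by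
    have h1 : H *ᵥ pv = rv - gv := by rw [hrv']; ring
    calc pv = H⁻¹ *ᵥ (H *ᵥ pv) := by
              rw [Matrix.mulVec_mulVec,
                Matrix.nonsing_inv_mul _ (isUnit_iff_isUnit_det _ |>.mp hH.isUnit),
                Matrix.one_mulVec]
      _ = H⁻¹ *ᵥ rv - H⁻¹ *ᵥ gv := by rw [h1, Matrix.mulVec_sub]
  set Q : ℝ := gv ⬝ᵥ H⁻¹ *ᵥ gv with hQ
  have hQnn : (0:ℝ) ≤ Q := by simpa using hN.posSemidef.dotProduct_mulVec_nonneg gv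
  have hQlow : (gv ⬝ᵥ gv) / Khat ≤ Q := aux_inv_low hK hH hHsym hup gv
  -- the cross term bound
  have hNr : rv ⬝ᵥ H⁻¹ *ᵥ rv ≤ (rv ⬝ᵥ rv) / μ := aux_inv_up hμ hH hlow rv
  have hcs := aux_cs H⁻¹ hN.posSemidef gv rv
  have hcross : gv ⬝ᵥ H⁻¹ *ᵥ rv ≤ Q / 2 := by
    have s1 : rv ⬝ᵥ H⁻¹ *ᵥ rv ≤ (gv ⬝ᵥ gv) / (4 * Khat) := by
      have : (rv ⬝ᵥ rv) / μ ≤ θ₁ ^ 2 * (gv ⬝ᵥ gv) / μ := by gcongr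
      have hθ' : θ₁ ^ 2 * (4 * Khat) ≤ μ := by
        rw [← le_div_iff₀ (by positivity)]; exact hθsq
      have h2 : θ₁ ^ 2 * (gv ⬝ᵥ gv) / μ ≤ (gv ⬝ᵥ gv) / (4 * Khat) := by
        rw [div_le_div_iff₀ hμ (by positivity)]
        nlinarith [mul_le_mul_of_nonneg_right hθ' hgvnn]
      linarith
    have s2 : (gv ⬝ᵥ gv) / (4 * Khat) ≤ Q / 4 := by
      have : (gv ⬝ᵥ gv) / (4 * Khat) = ((gv ⬝ᵥ gv) / Khat) / 4 := by ring
      rw [this]; linarith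
    have hNrnn : (0:ℝ) ≤ rv ⬝ᵥ H⁻¹ *ᵥ rv := by simpa using hN.posSemidef.dotProduct_mulVec_nonneg rv
    nlinarith [sq_nonneg (gv ⬝ᵥ H⁻¹ *ᵥ rv - Q / 2), sq_nonneg (gv ⬝ᵥ H⁻¹ *ᵥ rv)]
  -- conclude
  have hmain : ⟪p, g⟫ ≤ -(1 / 2) * Q := by
    have h1 : ⟪p, g⟫ = pv ⬝ᵥ gv := hinner p g
    have h2 : pv ⬝ᵥ gv = gv ⬝ᵥ H⁻¹ *ᵥ rv - Q := by
      rw [hpdec, sub_dotProduct, dotProduct_comm (H⁻¹ *ᵥ rv) gv,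
        dotProduct_comm (H⁻¹ *ᵥ gv) gv]
    rw [h1, h2]; linarith
  refine ⟨by rw [hQdef]; exact hmain, ?_⟩
  rw [hQdef]
  have heq : -‖g‖ ^ 2 / (2 * Khat) = -((gv ⬝ᵥ gv) / Khat) / 2 := by
    rw [hGg]; ring
  rw [heq]
  linarith
end

section
/- Let H be a symmetric p×p matrix with μ·I ⪯ H ⪯ K̂·I for some 0 < μ ≤ K̂, let g ∈ ℝ^p, 0 ≤ θ₁ < 1, 0 ≤ θ₂ < 1, and let p ∈ ℝ^p satisfy ‖Hp + g‖ ≤ θ₁‖g‖ and pᵀg ≤ −(1−θ₂) pᵀHp. Then pᵀg ≤ −(1−θ₂) μ (1−θ₁)² ‖g‖² / K̂². -/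
open scoped RealInnerProductSpace

lemma aux_psd_inner {d : ℕ} {M : Matrix (Fin d) (Fin d) ℝ} (hM : M.PosSemidef)
    (x : EuclideanSpace ℝ (Fin d)) : 0 ≤ ⟪x, Matrix.toEuclideanLin M x⟫ := by
  have := hM.dotProduct_mulVec_nonneg x.ofLp
  simpa [Matrix.toEuclideanLin_apply, PiLp.inner_apply, dotProduct, mul_comm] using this

lemma aux_sq_bound {d : ℕ} (H : Matrix (Fin d) (Fin d) ℝ) (μ Khat : ℝ)
    (hμ : 0 < μ)
    (hlow : (H - μ • (1 : Matrix (Fin d) (Fin d) ℝ)).PosSemidef)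
    (hup : (Khat • (1 : Matrix (Fin d) (Fin d) ℝ) - H).PosSemidef)
    (p : EuclideanSpace ℝ (Fin d)) :
    ‖Matrix.toEuclideanLin H p‖ ^ 2 ≤ Khat * ⟪p, Matrix.toEuclideanLin H p⟫ := by
  have h1 : (μ • (1 : Matrix (Fin d) (Fin d) ℝ)).PosSemidef := by
    rw [Matrix.posSemidef_iff_dotProduct_mulVec]
    constructor
    · simp [Matrix.IsHermitian]
    · intro x
      have h := dotProduct_star_self_nonneg x
      simp only [Matrix.smul_mulVec, Matrix.one_mulVec, dotProduct_smul]
      positivity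
  have hH : H.PosSemidef := by
    have := hlow.add h1
    simpa using this
  have hkey : ∀ S : Matrix (Fin d) (Fin d) ℝ, S * S = H →
      S * (Khat • (1 : Matrix (Fin d) (Fin d) ℝ) - H) * S = Khat • H - H * H := by
    intro S h
    rw [← h]; noncomm_ring
  have hBig : (Khat • H - H * H).PosSemidef := by
    obtain ⟨S, hS1, hS2⟩ : ∃ S : Matrix (Fin d) (Fin d) ℝ, Matrix.conjTranspose S = S ∧ S * S = H := by
      open scoped MatrixOrder in
      exact ⟨CFC.sqrt H, (CFC.sqrt_nonneg H).isSelfAdjoint, CFC.sqrt_mul_sqrt_self H hH.nonneg⟩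
    have := hup.conjTranspose_mul_mul_same S
    rwa [hS1, hkey S hS2] at this
  have h0 := aux_psd_inner hBig p
  have hm : Matrix.toEuclideanLin (Khat • H - H * H) p
      = Khat • Matrix.toEuclideanLin H p - Matrix.toEuclideanLin H (Matrix.toEuclideanLin H p) := by
    simp only [Matrix.toEuclideanLin_apply, Matrix.sub_mulVec, Matrix.smul_mulVec,
      ← Matrix.mulVec_mulVec]
    rfl
  rw [hm, inner_sub_right, inner_smul_right] at h0
  have hsym : (Matrix.toEuclideanLin H).IsSymmetric :=
    (Matrix.isHermitian_iff_isSymmetric).mp hH.1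
  have hadj : ⟪p, Matrix.toEuclideanLin H (Matrix.toEuclideanLin H p)⟫
      = ‖Matrix.toEuclideanLin H p‖ ^ 2 := by
    rw [← hsym p (Matrix.toEuclideanLin H p), real_inner_self_eq_norm_sq]
  rw [hadj] at h0
  linarith

theorem stmt_15 {d : ℕ} (H : Matrix (Fin d) (Fin d) ℝ) (μ Khat θ₁ θ₂ : ℝ)
    (g p : EuclideanSpace ℝ (Fin d))
    -- `H` is symmetric with `μ I ⪯ H ⪯ Khat I`, `0 < μ ≤ Khat`
    (hHsym : H.IsSymm) (hμ : 0 < μ) (hμK : μ ≤ Khat)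
    (hlow : (H - μ • (1 : Matrix (Fin d) (Fin d) ℝ)).PosSemidef)
    (hup : (Khat • (1 : Matrix (Fin d) (Fin d) ℝ) - H).PosSemidef)
    (hθ₁0 : 0 ≤ θ₁) (hθ₁1 : θ₁ < 1) (hθ₂0 : 0 ≤ θ₂) (hθ₂1 : θ₂ < 1)
    -- `‖Hp + g‖ ≤ θ₁ ‖g‖` and `pᵀg ≤ -(1-θ₂) pᵀHp`
    (hp₁ : ‖Matrix.toEuclideanLin H p + g‖ ≤ θ₁ * ‖g‖)
    (hp₂ : ⟪p, g⟫ ≤ -(1 - θ₂) * ⟪p, Matrix.toEuclideanLin H p⟫) :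
    -- `pᵀg ≤ -(1-θ₂) μ (1-θ₁)² ‖g‖² / Khat²`
    ⟪p, g⟫ ≤ -(1 - θ₂) * μ * (1 - θ₁) ^ 2 * ‖g‖ ^ 2 / Khat ^ 2 := by
  set q := Matrix.toEuclideanLin H p with hq
  set a := ⟪p, q⟫ with hadef
  set n := ‖g‖ with hn
  have hK : 0 < Khat := hμ.trans_le hμK
  have hTa : ‖q‖ ^ 2 ≤ Khat * a := aux_sq_bound H μ Khat hμ hlow hup p
  have hg : (1 - θ₁) * n ≤ ‖q‖ := by
    have h1 : n ≤ ‖q + g‖ + ‖q‖ := by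
      have := norm_sub_le (q + g) q
      simpa using this
    nlinarith [hp₁]
  have hgn : 0 ≤ (1 - θ₁) * n := mul_nonneg (by linarith) (norm_nonneg g)
  have ha1 : ((1 - θ₁) * n) ^ 2 ≤ Khat * a := by
    nlinarith [hg, hTa]
  have key : ⟪p, g⟫ ≤ -(1 - θ₂) * a := hp₂
  have hc : (0:ℝ) ≤ 1 - θ₂ := by linarith
  have ha0 : 0 ≤ a := by nlinarith [sq_nonneg ((1 - θ₁) * n)]
  have h2 : μ * (1 - θ₁) ^ 2 * n ^ 2 ≤ Khat ^ 2 * a := by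
    nlinarith [ha1, hμK, ha0, sq_nonneg ((1 - θ₁) * n), hK]
  have hfinal : -(1 - θ₂) * a ≤ -(1 - θ₂) * μ * (1 - θ₁) ^ 2 * n ^ 2 / Khat ^ 2 := by
    rw [le_div_iff₀ (by positivity : (0:ℝ) < Khat ^ 2)]
    nlinarith [mul_le_mul_of_nonneg_left h2 hc]
  linarith
end

section
/- Let F : ℝ^p → ℝ be twice continuously differentiable with ∇²F L-Lipschitz (‖∇²F(x) − ∇²F(y)‖ ≤ L‖x−y‖ for all x, y). Let γ > 0, 0 < ε < 1, and 0 < β < 1/2 with 1 − 2ε − 2(1−ε)β > 0. Let x ∈ ℝ^p and H a symmetric matrix with (1−ε)γ·I ⪯ H and ‖H − ∇²F(x)‖ ≤ εγ, and set p = −H⁻¹∇F(x). If ‖∇F(x)‖ ≤ 3(1−ε)γ²(1 − 2ε − 2(1−ε)β)/L, then F(x + p) ≤ F(x) + β pᵀ∇F(x); i.e., the unit step size α = 1 satisfies the Armijo condition. -/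
open scoped RealInnerProductSpace

/-- One-dimensional second-order Taylor bound with a linear bound on the
second derivative increment. -/
lemma taylor2_aux (g g' g'' : ℝ → ℝ) (K : ℝ)
    (h1 : ∀ t, HasDerivAt g (g' t) t)
    (h2 : ∀ t, HasDerivAt g' (g'' t) t)
    (hK : ∀ t ∈ Set.Icc (0:ℝ) 1, g'' t ≤ g'' 0 + K * t) :
    g 1 ≤ g 0 + g' 0 + g'' 0 / 2 + K / 6 := by
  set ψ1 : ℝ → ℝ := fun t => g' t - g' 0 - g'' 0 * t - K * t ^ 2 / 2 with hψ1def
  have hψ1d : ∀ t, HasDerivAt ψ1 (g'' t - g'' 0 - K * t) t := by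
    intro t
    have h := (((h2 t).sub_const (g' 0)).sub
        ((hasDerivAt_id t).const_mul (g'' 0))).sub
        (((hasDerivAt_pow 2 t).const_mul K).div_const 2)
    refine h.congr_deriv ?_
    norm_num
    ring
  have hψ1anti : AntitoneOn ψ1 (Set.Icc 0 1) := by
    apply antitoneOn_of_deriv_nonpos (convex_Icc 0 1)
    · exact (Differentiable.continuous fun t => (hψ1d t).differentiableAt).continuousOn
    · exact fun t _ => ((hψ1d t).differentiableAt).differentiableWithinAt
    · intro t ht
      rw [interior_Icc] at ht
      rw [(hψ1d t).deriv]
      have := hK t ⟨ht.1.le, ht.2.le⟩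
      linarith
  have hψ1le : ∀ t ∈ Set.Icc (0:ℝ) 1, ψ1 t ≤ 0 := by
    intro t ht
    have h0 : ψ1 0 = 0 := by simp [hψ1def]
    have := hψ1anti (Set.left_mem_Icc.2 zero_le_one) ht ht.1
    linarith
  set ψ : ℝ → ℝ := fun t => g t - g 0 - g' 0 * t - g'' 0 * t ^ 2 / 2 - K * t ^ 3 / 6
    with hψdef
  have hψd : ∀ t, HasDerivAt ψ (ψ1 t) t := by
    intro t
    have h := ((((h1 t).sub_const (g 0)).sub
        ((hasDerivAt_id t).const_mul (g' 0))).sub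
        (((hasDerivAt_pow 2 t).const_mul (g'' 0)).div_const 2)).sub
        (((hasDerivAt_pow 3 t).const_mul K).div_const 6)
    refine h.congr_deriv ?_
    simp [hψ1def]
    ring
  have hψanti : AntitoneOn ψ (Set.Icc 0 1) := by
    apply antitoneOn_of_deriv_nonpos (convex_Icc 0 1)
    · exact (Differentiable.continuous fun t => (hψd t).differentiableAt).continuousOn
    · exact fun t _ => ((hψd t).differentiableAt).differentiableWithinAt
    · intro t ht
      rw [interior_Icc] at ht
      rw [(hψd t).deriv]
      exact hψ1le t ⟨ht.1.le, ht.2.le⟩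
  have h1' := hψanti (Set.left_mem_Icc.2 zero_le_one) (Set.right_mem_Icc.2 zero_le_one)
      zero_le_one
  simp only [hψdef] at h1'
  nlinarith [h1']

set_option maxHeartbeats 1000000 in
theorem stmt_16 {d : ℕ} (F : EuclideanSpace ℝ (Fin d) → ℝ)
    (γ L ε β : ℝ) (x p : EuclideanSpace ℝ (Fin d))
    (H : EuclideanSpace ℝ (Fin d) →L[ℝ] EuclideanSpace ℝ (Fin d))
    -- `F` is twice continuously differentiable with `L`-Lipschitz Hessian
    (hFC : ContDiff ℝ 2 F)
    (hLip : ∀ a b, ‖hess F a - hess F b‖ ≤ L * ‖a - b‖)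
    (hγ : 0 < γ) (hε : 0 < ε) (hε1 : ε < 1)
    (hβ : 0 < β) (hβhalf : β < 1 / 2)
    (hcond : 1 - 2 * ε - 2 * (1 - ε) * β > 0)
    -- `H` is symmetric with `(1-ε)γ I ⪯ H` and `‖H - ∇²F(x)‖ ≤ εγ`
    (hHsym : ∀ u v, ⟪H u, v⟫ = ⟪u, H v⟫)
    (hHlow : ∀ v, (1 - ε) * γ * ‖v‖ ^ 2 ≤ ⟪H v, v⟫)
    (hnear : ‖H - hess F x‖ ≤ ε * γ)
    -- `p = -H⁻¹ ∇F(x)`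
    (hp : H p = -(gradient F x))
    -- gradient smallness condition
    (hgrad : ‖gradient F x‖ ≤ 3 * (1 - ε) * γ ^ 2 * (1 - 2 * ε - 2 * (1 - ε) * β) / L) :
    -- the unit step size satisfies the Armijo condition
    F (x + p) ≤ F x + β * ⟪p, gradient F x⟫ := by
  by_cases hp0 : p = 0
  · simp [hp0]
  have hnpos : (0:ℝ) < ‖p‖ := norm_pos_iff.2 hp0
  have hεγ : (0:ℝ) < (1 - ε) * γ := mul_pos (by linarith) hγ
  -- L > 0
  have hL0 : 0 < L := by
    rcases lt_trichotomy L 0 with h | h | h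
    · exfalso
      have h1 := hLip (x + p) x
      have h2 : ‖x + p - x‖ = ‖p‖ := by simp
      rw [h2] at h1
      nlinarith [norm_nonneg (hess F (x + p) - hess F x)]
    · exfalso
      have h1 : ‖gradient F x‖ ≤ 0 := by
        rw [h] at hgrad; simpa using hgrad
      have h2 : gradient F x = 0 := norm_le_zero_iff.1 h1
      have h3 := hHlow p
      rw [hp, h2] at h3
      simp at h3
      nlinarith [h3, mul_pos hεγ (pow_pos hnpos 2)]
    · exact h
  -- differentiability facts
  have hFdiff : Differentiable ℝ F := hFC.differentiable (by norm_num)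
  have hfd2 : Differentiable ℝ (fderiv ℝ F) :=
    (hFC.fderiv_right (m := 1) (by norm_num)).differentiable (by norm_num)
  have hT : IsBoundedLinearMap ℝ
      (fun φ : (EuclideanSpace ℝ (Fin d)) →L[ℝ] ℝ =>
        (InnerProductSpace.toDual ℝ (EuclideanSpace ℝ (Fin d))).symm φ) := by
    refine ⟨⟨fun a b => map_add _ a b, ?_⟩, ⟨1, one_pos, fun φ => ?_⟩⟩
    · intro c φ
      simp
    · simp
  have hgdiff : Differentiable ℝ (gradient F) := by
    have : gradient F = fun y =>
        (InnerProductSpace.toDual ℝ (EuclideanSpace ℝ (Fin d))).symm (fderiv ℝ F y) := rfl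
    rw [this]
    exact fun y => (hT.differentiableAt).comp y (hfd2 y)
  have hhess : ∀ y, HasFDerivAt (gradient F) (hess F y) y :=
    fun y => (hgdiff y).hasFDerivAt
  have hinner : ∀ y v, fderiv ℝ F y v = ⟪gradient F y, v⟫ := by
    intro y v
    rw [show gradient F y =
        (InnerProductSpace.toDual ℝ (EuclideanSpace ℝ (Fin d))).symm (fderiv ℝ F y) from rfl,
      InnerProductSpace.toDual_symm_apply]
  -- the line through x in direction p
  have hc : ∀ t : ℝ, HasDerivAt (fun s : ℝ => x + s • p) p t := by
    intro t
    simpa using ((hasDerivAt_id t).smul_const p).const_add x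
  have hg : ∀ t : ℝ, HasDerivAt (fun s : ℝ => F (x + s • p))
      (⟪gradient F (x + t • p), p⟫) t := by
    intro t
    have h := ((hFdiff (x + t • p)).hasFDerivAt).comp_hasDerivAt t (hc t)
    rwa [hinner] at h
  have hg1 : ∀ t : ℝ, HasDerivAt (fun s : ℝ => ⟪gradient F (x + s • p), p⟫)
      (⟪(hess F (x + t • p)) p, p⟫) t := by
    intro t
    have hgd : HasDerivAt (fun s : ℝ => gradient F (x + s • p))
        ((hess F (x + t • p)) p) t :=
      by have := (hhess (x + t • p)).comp_hasDerivAt t (hc t); exact this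
    have h := HasDerivAt.inner ℝ hgd (hasDerivAt_const t p)
    simpa using h
  -- second-derivative increment bound
  have hx0 : x + (0:ℝ) • p = x := by simp
  have hK : ∀ t ∈ Set.Icc (0:ℝ) 1,
      ⟪(hess F (x + t • p)) p, p⟫ ≤ ⟪(hess F (x + (0:ℝ) • p)) p, p⟫
        + (L * ‖p‖ ^ 3) * t := by
    intro t ht
    rw [hx0]
    have h1 : ⟪(hess F (x + t • p)) p, p⟫ - ⟪(hess F x) p, p⟫
        = ⟪(hess F (x + t • p) - hess F x) p, p⟫ := by
      rw [ContinuousLinearMap.sub_apply, inner_sub_left]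
    have h2 : ⟪(hess F (x + t • p) - hess F x) p, p⟫
        ≤ ‖(hess F (x + t • p) - hess F x) p‖ * ‖p‖ := real_inner_le_norm _ _
    have h3 : ‖(hess F (x + t • p) - hess F x) p‖
        ≤ ‖hess F (x + t • p) - hess F x‖ * ‖p‖ :=
      ContinuousLinearMap.le_opNorm _ _
    have h4 : ‖hess F (x + t • p) - hess F x‖ ≤ L * (t * ‖p‖) := by
      have := hLip (x + t • p) x
      have he : ‖x + t • p - x‖ = t * ‖p‖ := by
        rw [show x + t • p - x = t • p by abel, norm_smul, Real.norm_eq_abs,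
          abs_of_nonneg ht.1]
      rwa [he] at this
    have hnn : (0:ℝ) ≤ ‖p‖ := norm_nonneg p
    have hb : ⟪(hess F (x + t • p) - hess F x) p, p⟫ ≤ (L * ‖p‖ ^ 3) * t := by
      calc ⟪(hess F (x + t • p) - hess F x) p, p⟫
          ≤ ‖(hess F (x + t • p) - hess F x) p‖ * ‖p‖ := h2
        _ ≤ (‖hess F (x + t • p) - hess F x‖ * ‖p‖) * ‖p‖ :=
            mul_le_mul_of_nonneg_right h3 hnn
        _ ≤ ((L * (t * ‖p‖)) * ‖p‖) * ‖p‖ :=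
            mul_le_mul_of_nonneg_right (mul_le_mul_of_nonneg_right h4 hnn) hnn
        _ = (L * ‖p‖ ^ 3) * t := by ring
    linarith [h1, hb]
  -- Taylor bound
  have key := taylor2_aux (fun s : ℝ => F (x + s • p))
      (fun s : ℝ => ⟪gradient F (x + s • p), p⟫)
      (fun s : ℝ => ⟪(hess F (x + s • p)) p, p⟫)
      (L * ‖p‖ ^ 3) hg hg1 hK
  simp only [hx0, one_smul] at key
  -- key : F (x + p) ≤ F x + ⟪gradient F x, p⟫ + ⟪hess F x p, p⟫ / 2 + L * ‖p‖ ^ 3 / 6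
  set gx := gradient F x with hgx
  set n := ‖p‖ with hn
  set Q := ⟪H p, p⟫ with hQ
  have f1 : ⟪gx, p⟫ = -Q := by
    rw [hQ, hp, inner_neg_left]
    exact (neg_neg _).symm
  have f2 : ⟪(hess F x) p, p⟫ ≤ Q + ε * γ * n ^ 2 := by
    have h1 : ⟪(hess F x) p, p⟫ - Q = ⟪(hess F x - H) p, p⟫ := by
      rw [hQ, ContinuousLinearMap.sub_apply, inner_sub_left]
    have h2 : ⟪(hess F x - H) p, p⟫ ≤ ‖(hess F x - H) p‖ * ‖p‖ := real_inner_le_norm _ _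
    have h3 : ‖(hess F x - H) p‖ ≤ ‖hess F x - H‖ * ‖p‖ :=
      ContinuousLinearMap.le_opNorm _ _
    have h4 : ‖hess F x - H‖ ≤ ε * γ := by rwa [norm_sub_rev] at hnear
    have hnn : (0:ℝ) ≤ ‖p‖ := norm_nonneg p
    have hb : ⟪(hess F x - H) p, p⟫ ≤ ε * γ * n ^ 2 := by
      calc ⟪(hess F x - H) p, p⟫ ≤ ‖(hess F x - H) p‖ * ‖p‖ := h2
        _ ≤ (‖hess F x - H‖ * ‖p‖) * ‖p‖ := mul_le_mul_of_nonneg_right h3 hnn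
        _ ≤ ((ε * γ) * ‖p‖) * ‖p‖ :=
            mul_le_mul_of_nonneg_right (mul_le_mul_of_nonneg_right h4 hnn) hnn
        _ = ε * γ * n ^ 2 := by rw [hn]; ring
    linarith [h1, hb]
  have f3 : (1 - ε) * γ * n ^ 2 ≤ Q := hHlow p
  have f4 : Q ≤ ‖gx‖ * n := by
    rw [hQ, hp]
    calc ⟪-gx, p⟫ ≤ ‖-gx‖ * ‖p‖ := real_inner_le_norm _ _
      _ = ‖gx‖ * n := by rw [norm_neg]
  have f5 : ‖gx‖ * L ≤ 3 * (1 - ε) * γ ^ 2 * (1 - 2 * ε - 2 * (1 - ε) * β) := by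
    calc ‖gx‖ * L ≤ (3 * (1 - ε) * γ ^ 2 * (1 - 2 * ε - 2 * (1 - ε) * β) / L) * L :=
          mul_le_mul_of_nonneg_right hgrad hL0.le
      _ = 3 * (1 - ε) * γ ^ 2 * (1 - 2 * ε - 2 * (1 - ε) * β) := by
          field_simp
  -- bound on L * n
  have h7 : (1 - ε) * γ * n ≤ ‖gx‖ := by
    have h := f3.trans f4
    have : (1 - ε) * γ * n * n ≤ ‖gx‖ * n := by nlinarith
    exact le_of_mul_le_mul_right this hnpos
  have hn6 : L * n ≤ 3 * γ * (1 - 2 * ε - 2 * (1 - ε) * β) := by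
    have hA : L * ((1 - ε) * γ * n) ≤ L * ‖gx‖ :=
      mul_le_mul_of_nonneg_left h7 hL0.le
    nlinarith [f5]
  -- final algebra
  have f1' : ⟪p, gx⟫ = -Q := by rw [real_inner_comm]; exact f1
  rw [f1']
  have hhalf : (0:ℝ) ≤ 1 / 2 - β := by linarith
  have s1 : (1 / 2 - β) * ((1 - ε) * γ * n ^ 2) ≤ (1 / 2 - β) * Q :=
    mul_le_mul_of_nonneg_left f3 hhalf
  have s2 : L * n * n ^ 2 ≤ 3 * γ * (1 - 2 * ε - 2 * (1 - ε) * β) * n ^ 2 :=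
    mul_le_mul_of_nonneg_right hn6 (sq_nonneg n)
  nlinarith [key, f2, s1, s2]
end
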